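/- arXiv:2107.14683 — 11 statements merged into one kernel-verified Lean document; each statement's English description precedes it below -/
import Mathlib

section
/- Let α, a, b, c : I → ℝ be differentiable functions on an open interval I ⊆ ℝ satisfying a' = (a/2)(−a² + b² + c²), b' = (b/2)(a² − b² + c²), c' = (c/2)(a² + b² − c² + 2α), and α' = c²α on I. If a, b, and α are everywhere positive on I, then the function (a·b)/α is constant on I; equivalently, there exists a constant A ∈ ℝ with α = e^{−A}·a·b on I. -/
/-- For the four-equation SU(2) centrally flat ODE system
`a' = (a/2)(−a² + b² + c²)`, `b' = (b/2)(a² − b² + c²)`,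
`c' = (c/2)(a² + b² − c² + 2α)`, `α' = c²α` on an open interval `I`,
with `a`, `b`, `α` positive on `I`, the function `(a·b)/α` is constant on `I`;
equivalently there is a constant `A` with `α = e^(−A)·a·b` on `I`. -/
theorem su2_four_eq_system_ab_over_alpha_constant
    (I : Set ℝ) (hIopen : IsOpen I) (hIconn : I.OrdConnected)
    (a b c α : ℝ → ℝ)
    (ha : ∀ t ∈ I, HasDerivAt a (a t / 2 * (-(a t) ^ 2 + (b t) ^ 2 + (c t) ^ 2)) t)
    (hb : ∀ t ∈ I, HasDerivAt b (b t / 2 * ((a t) ^ 2 - (b t) ^ 2 + (c t) ^ 2)) t)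
    (hc : ∀ t ∈ I, HasDerivAt c (c t / 2 * ((a t) ^ 2 + (b t) ^ 2 - (c t) ^ 2 + 2 * α t)) t)
    (hα : ∀ t ∈ I, HasDerivAt α ((c t) ^ 2 * α t) t)
    (hapos : ∀ t ∈ I, 0 < a t) (hbpos : ∀ t ∈ I, 0 < b t) (hαpos : ∀ t ∈ I, 0 < α t) :
    (∀ s ∈ I, ∀ t ∈ I, a s * b s / α s = a t * b t / α t) ∧
    ∃ A : ℝ, ∀ t ∈ I, α t = Real.exp (-A) * (a t * b t) := by
  have hconv : Convex ℝ I := convex_iff_ordConnected.mpr hIconn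
  set f : ℝ → ℝ := fun t => a t * b t / α t with hf
  have key : ∀ t ∈ I, HasDerivAt f 0 t := by
    intro t ht
    have hne := (hαpos t ht).ne'
    have h := ((ha t ht).mul (hb t ht)).div (hα t ht) hne
    refine h.congr_deriv ?_
    rw [Pi.mul_apply, div_eq_iff (pow_ne_zero 2 hne), zero_mul]
    ring
  have hdiff : DifferentiableOn ℝ f I := fun t ht =>
    (key t ht).differentiableAt.differentiableWithinAt
  have hfd : ∀ t ∈ I, fderivWithin ℝ f I t = 0 := by
    intro t ht
    rw [fderivWithin_of_isOpen hIopen ht, (key t ht).hasFDerivAt.fderiv]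
    ext x
    simp
  have hconst : ∀ s ∈ I, ∀ t ∈ I, f s = f t := fun s hs t ht =>
    hconv.is_const_of_fderivWithin_eq_zero hdiff hfd hs ht
  refine ⟨hconst, ?_⟩
  rcases Set.eq_empty_or_nonempty I with hI | ⟨t₀, ht₀⟩
  · exact ⟨0, fun t ht => by simp [hI] at ht⟩
  · refine ⟨Real.log (f t₀), fun t ht => ?_⟩
    have hr : 0 < f t₀ := by
      exact div_pos (mul_pos (hapos t₀ ht₀) (hbpos t₀ ht₀)) (hαpos t₀ ht₀)
    rw [Real.exp_neg, Real.exp_log hr]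
    have hne := (hαpos t ht).ne'
    have h1 : a t * b t = f t₀ * α t := (div_eq_iff hne).mp (hconst t ht t₀ ht₀)
    rw [h1, ← mul_assoc, inv_mul_cancel₀ hr.ne', one_mul]
end

section
/- Let A ∈ ℝ and let a, b, c : (ξ, η) → ℝ be differentiable functions on an open interval satisfying the SU(2) centrally flat ODE system a' = (a/2)(−a² + b² + c²), b' = (b/2)(a² − b² + c²), c' = (c/2)(a² + b² + 2e^{−A}ab − c²). If there exists t₀ ∈ (ξ, η) with a(t₀) > 0, b(t₀) > 0, and c(t₀) > 0, then a(t) > 0, b(t) > 0, and c(t) > 0 for every t ∈ (ξ, η). -/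
open Set intervalIntegral MeasureTheory

/-- Generic sign-persistence lemma: if `x' = x * g` on an open interval with `g`
continuous, and `x t₀ > 0`, then `x > 0` on the interval. -/
lemma su2_pos_persists_aux {ξ η t₀ : ℝ} (ht₀ : t₀ ∈ Set.Ioo ξ η)
    {x g : ℝ → ℝ}
    (hx : ∀ t ∈ Set.Ioo ξ η, HasDerivAt x (x t * g t) t)
    (hg : ContinuousOn g (Set.Ioo ξ η))
    (hx₀ : 0 < x t₀) :
    ∀ t ∈ Set.Ioo ξ η, 0 < x t := by
  set s := Set.Ioo ξ η with hs
  have hso : IsOpen s := isOpen_Ioo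
  set G : ℝ → ℝ := fun t => ∫ u in t₀..t, g u with hG
  have hint : ∀ t ∈ s, IntervalIntegrable g volume t₀ t := by
    intro t ht
    apply ContinuousOn.intervalIntegrable
    exact hg.mono (Set.ordConnected_Ioo.uIcc_subset ht₀ ht)
  have hGd : ∀ t ∈ s, HasDerivAt G (g t) t := by
    intro t ht
    exact intervalIntegral.integral_hasDerivAt_right (hint t ht)
      (hg.stronglyMeasurableAtFilter hso t ht) (hg.continuousAt (hso.mem_nhds ht))
  set F : ℝ → ℝ := fun t => x t * Real.exp (-(G t)) with hF
  have hFd : ∀ t ∈ s, HasDerivAt F 0 t := by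
    intro t ht
    have h1 : HasDerivAt (fun u => Real.exp (-(G u))) (-(g t) * Real.exp (-(G t))) t := by
      have := ((hGd t ht).neg).exp
      simpa [mul_comm] using this
    have : HasDerivAt (fun u => x u * Real.exp (-(G u)))
        (x t * g t * Real.exp (-(G t)) + x t * (-(g t) * Real.exp (-(G t)))) t :=
      (hx t ht).mul h1
    convert this using 1
    ring
  have hconst : ∀ t ∈ s, F t = F t₀ := by
    intro t ht
    have hdo : DifferentiableOn ℝ F s := fun u hu =>
      ((hFd u hu).differentiableAt).differentiableWithinAt
    apply (convex_Ioo ξ η).is_const_of_fderivWithin_eq_zero hdo _ ht ht₀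
    intro u hu
    have h0 : fderiv ℝ F u = 0 := by
      have := (hFd u hu).hasFDerivAt.fderiv
      rw [this]; ext v; simp
    rw [fderivWithin_of_isOpen hso hu, h0]
  intro t ht
  have hFt : F t = x t₀ * Real.exp (-(G t₀)) := hconst t ht
  have hGt0 : G t₀ = 0 := by simp [hG]
  have hFpos : 0 < F t := by
    rw [hFt, hGt0]; simpa using hx₀
  have h2 : 0 < x t * Real.exp (-(G t)) := hFpos
  nlinarith [Real.exp_pos (-(G t))]

/-- For a solution of the SU(2) centrally flat ODE system on an open
interval `(ξ, η)`, if `a`, `b`, `c` are all positive at a single point `t₀ ∈ (ξ, η)`,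
then they are positive throughout `(ξ, η)`. -/
theorem su2_system_positivity_persists
    (A ξ η : ℝ) (a b c : ℝ → ℝ)
    (ha : ∀ t ∈ Set.Ioo ξ η,
      HasDerivAt a (a t / 2 * (-(a t) ^ 2 + (b t) ^ 2 + (c t) ^ 2)) t)
    (hb : ∀ t ∈ Set.Ioo ξ η,
      HasDerivAt b (b t / 2 * ((a t) ^ 2 - (b t) ^ 2 + (c t) ^ 2)) t)
    (hc : ∀ t ∈ Set.Ioo ξ η, HasDerivAt c
      (c t / 2 * ((a t) ^ 2 + (b t) ^ 2 + 2 * Real.exp (-A) * a t * b t - (c t) ^ 2)) t)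
    (t₀ : ℝ) (ht₀ : t₀ ∈ Set.Ioo ξ η)
    (ha₀ : 0 < a t₀) (hb₀ : 0 < b t₀) (hc₀ : 0 < c t₀) :
    ∀ t ∈ Set.Ioo ξ η, 0 < a t ∧ 0 < b t ∧ 0 < c t := by
  have hca : ContinuousOn a (Set.Ioo ξ η) := fun t ht =>
    ((ha t ht).continuousAt).continuousWithinAt
  have hcb : ContinuousOn b (Set.Ioo ξ η) := fun t ht =>
    ((hb t ht).continuousAt).continuousWithinAt
  have hcc : ContinuousOn c (Set.Ioo ξ η) := fun t ht =>
    ((hc t ht).continuousAt).continuousWithinAt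
  have hA : ∀ t ∈ Set.Ioo ξ η, 0 < a t := by
    apply su2_pos_persists_aux ht₀
      (g := fun t => (-(a t) ^ 2 + (b t) ^ 2 + (c t) ^ 2) / 2)
    · intro t ht
      have := ha t ht
      convert this using 1; ring
    · exact (((hca.pow 2).neg.add (hcb.pow 2)).add (hcc.pow 2)).div_const 2
    · exact ha₀
  have hB : ∀ t ∈ Set.Ioo ξ η, 0 < b t := by
    apply su2_pos_persists_aux ht₀
      (g := fun t => ((a t) ^ 2 - (b t) ^ 2 + (c t) ^ 2) / 2)
    · intro t ht
      have := hb t ht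
      convert this using 1; ring
    · exact (((hca.pow 2).sub (hcb.pow 2)).add (hcc.pow 2)).div_const 2
    · exact hb₀
  have hC : ∀ t ∈ Set.Ioo ξ η, 0 < c t := by
    apply su2_pos_persists_aux ht₀
      (g := fun t => ((a t) ^ 2 + (b t) ^ 2 + 2 * Real.exp (-A) * a t * b t - (c t) ^ 2) / 2)
    · intro t ht
      have := hc t ht
      convert this using 1; ring
    · exact ((((hca.pow 2).add (hcb.pow 2)).add
        ((continuousOn_const.mul hca).mul hcb)).sub (hcc.pow 2)).div_const 2
    · exact hc₀
  exact fun t ht => ⟨hA t ht, hB t ht, hC t ht⟩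
end

section
/- Let A ∈ ℝ and let a, b, c : (ξ, η) → ℝ be differentiable functions on an open interval satisfying the SU(2) centrally flat ODE system a' = (a/2)(−a² + b² + c²), b' = (b/2)(a² − b² + c²), c' = (c/2)(a² + b² + 2e^{−A}ab − c²), with a, b, c everywhere positive. If a(t₀) = b(t₀) for some t₀ ∈ (ξ, η), then a(t) = b(t) for all t ∈ (ξ, η). -/
/-- For a positive solution of the SU(2) centrally flat ODE system on an
open interval `(ξ, η)`, if `a(t₀) = b(t₀)` at some point `t₀ ∈ (ξ, η)`, then `a = b`
everywhere on `(ξ, η)`. -/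
theorem su2_system_a_eq_b_propagates
    (A ξ η : ℝ) (a b c : ℝ → ℝ)
    (ha : ∀ t ∈ Set.Ioo ξ η,
      HasDerivAt a (a t / 2 * (-(a t) ^ 2 + (b t) ^ 2 + (c t) ^ 2)) t)
    (hb : ∀ t ∈ Set.Ioo ξ η,
      HasDerivAt b (b t / 2 * ((a t) ^ 2 - (b t) ^ 2 + (c t) ^ 2)) t)
    (hc : ∀ t ∈ Set.Ioo ξ η, HasDerivAt c
      (c t / 2 * ((a t) ^ 2 + (b t) ^ 2 + 2 * Real.exp (-A) * a t * b t - (c t) ^ 2)) t)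
    (hapos : ∀ t ∈ Set.Ioo ξ η, 0 < a t)
    (hbpos : ∀ t ∈ Set.Ioo ξ η, 0 < b t)
    (hcpos : ∀ t ∈ Set.Ioo ξ η, 0 < c t)
    (t₀ : ℝ) (ht₀ : t₀ ∈ Set.Ioo ξ η) (hab : a t₀ = b t₀) :
    ∀ t ∈ Set.Ioo ξ η, a t = b t := by
  intro t ht
  set u : ℝ → ℝ := fun s => a s - b s with hu
  set G : ℝ → ℝ := fun s => ((c s) ^ 2 - (a s) ^ 2 - 2 * a s * b s - (b s) ^ 2) / 2 with hG
  have hGc : ∀ s ∈ Set.Ioo ξ η, ContinuousAt G s := by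
    intro s hs
    exact ((((hc s hs).continuousAt.pow 2).sub ((ha s hs).continuousAt.pow 2)).sub
      ((continuousAt_const.mul (ha s hs).continuousAt).mul (hb s hs).continuousAt)
      |>.sub ((hb s hs).continuousAt.pow 2)).div_const 2
  have hu' : ∀ s ∈ Set.Ioo ξ η, HasDerivAt u (G s * u s) s := by
    intro s hs
    have h := (ha s hs).sub (hb s hs)
    refine h.congr_deriv ?_
    simp only [hu, hG]
    ring
  -- uniqueness on a compact interval between t₀ and t
  have key : ∀ p q : ℝ, p ≤ q → Set.Icc p q ⊆ Set.Ioo ξ η → u p = 0 ∨ u q = 0 →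
      Set.EqOn u (fun _ => (0 : ℝ)) (Set.Icc p q) := by
    intro p q hpq hsub hinit
    have hcomp : IsCompact (Set.Icc p q) := isCompact_Icc
    have hGon : ContinuousOn G (Set.Icc p q) := fun s hs => (hGc s (hsub hs)).continuousWithinAt
    obtain ⟨C, hC⟩ := hcomp.exists_bound_of_continuousOn hGon
    set K : NNReal := C.toNNReal with hK
    set v : ℝ → ℝ → ℝ := fun s x => if s ∈ Set.Icc p q then G s * x else 0 with hv
    have hlip : ∀ s, LipschitzOnWith K (v s) Set.univ := by
      intro s
      by_cases hs : s ∈ Set.Icc p q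
      · simp only [hv, if_pos hs]
        apply LipschitzWith.lipschitzOnWith
        have h1 : LipschitzWith ‖G s‖₊ (fun x : ℝ => G s * x) := by
          simpa [smul_eq_mul] using lipschitzWith_smul (G s) (β := ℝ)
        refine h1.weaken ?_
        rw [hK, ← Real.toNNReal_coe (r := ‖G s‖₊)]
        exact Real.toNNReal_le_toNNReal (by simpa using hC s hs)
      · simp only [hv, if_neg hs]
        exact ((LipschitzWith.const (0 : ℝ)).weaken (zero_le : (0 : NNReal) ≤ K)).lipschitzOnWith
    have hcontu : ContinuousOn u (Set.Icc p q) := fun s hs =>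
      (hu' s (hsub hs)).continuousAt.continuousWithinAt
    have hzero : ∀ s, v s 0 = 0 := by
      intro s; simp only [hv]; split_ifs <;> simp
    rcases hinit with h0 | h0
    · refine ODE_solution_unique_of_mem_Icc_right (v := v) (s := fun _ => Set.univ) (fun s _ => hlip s)
        hcontu ?_ (fun _ _ => Set.mem_univ _) continuousOn_const ?_
        (fun _ _ => Set.mem_univ _) (by simpa using h0)
      · intro s hs
        have hs' : s ∈ Set.Icc p q := Set.Ico_subset_Icc_self hs
        have := (hu' s (hsub hs')).hasDerivWithinAt (s := Set.Ici s)
        simpa only [hv, if_pos hs'] using this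
      · intro s hs
        have hs' : s ∈ Set.Icc p q := Set.Ico_subset_Icc_self hs
        rw [hzero s]
        exact (hasDerivAt_const s (0 : ℝ)).hasDerivWithinAt
    · refine ODE_solution_unique_of_mem_Icc_left (v := v) (s := fun _ => Set.univ) (fun s _ => hlip s)
        hcontu ?_ (fun _ _ => Set.mem_univ _) continuousOn_const ?_
        (fun _ _ => Set.mem_univ _) (by simpa using h0)
      · intro s hs
        have hs' : s ∈ Set.Icc p q := Set.Ioc_subset_Icc_self hs
        have := (hu' s (hsub hs')).hasDerivWithinAt (s := Set.Iic s)
        simpa only [hv, if_pos hs'] using this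
      · intro s hs
        have hs' : s ∈ Set.Icc p q := Set.Ioc_subset_Icc_self hs
        rw [hzero s]
        exact (hasDerivAt_const s (0 : ℝ)).hasDerivWithinAt
  have hu0 : u t₀ = 0 := by simp [hu, hab]
  have hut : u t = 0 := by
    rcases le_total t₀ t with h | h
    · have hsub : Set.Icc t₀ t ⊆ Set.Ioo ξ η := fun s hs =>
        ⟨lt_of_lt_of_le ht₀.1 hs.1, lt_of_le_of_lt hs.2 ht.2⟩
      exact key t₀ t h hsub (Or.inl hu0) ⟨h, le_rfl⟩
    · have hsub : Set.Icc t t₀ ⊆ Set.Ioo ξ η := fun s hs =>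
        ⟨lt_of_lt_of_le ht.1 hs.1, lt_of_le_of_lt hs.2 ht₀.2⟩
      exact key t t₀ h hsub (Or.inr hu0) ⟨le_rfl, h⟩
  have : a t - b t = 0 := hut
  linarith
end

section
/- Let A ∈ ℝ and let a, b, c : I → ℝ be differentiable functions on an open interval satisfying the SU(2) centrally flat ODE system a' = (a/2)(−a² + b² + c²), b' = (b/2)(a² − b² + c²), c' = (c/2)(a² + b² + 2e^{−A}ab − c²). Then on I one has the identity (−a² + b² + c²)' = a⁴ − (b² − c²)² + 2e^{−A}abc². Consequently, if a, b, c are positive and −a(t)² + b(t)² + c(t)² < 0 at some point t ∈ I, then the derivative of −a² + b² + c² at t is strictly positive. -/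
/-- For the SU(2) centrally flat ODE system on an open interval `I`,
`(−a² + b² + c²)' = a⁴ − (b² − c²)² + 2e^(−A)abc²`; consequently, for positive
solutions, wherever `−a² + b² + c² < 0`, its derivative is strictly positive. -/
theorem su2_system_deriv_of_neg_a_sq_plus_b_sq_plus_c_sq
    (A : ℝ) (I : Set ℝ) (hIopen : IsOpen I) (hIconn : I.OrdConnected)
    (a b c : ℝ → ℝ)
    (ha : ∀ t ∈ I, HasDerivAt a (a t / 2 * (-(a t) ^ 2 + (b t) ^ 2 + (c t) ^ 2)) t)
    (hb : ∀ t ∈ I, HasDerivAt b (b t / 2 * ((a t) ^ 2 - (b t) ^ 2 + (c t) ^ 2)) t)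
    (hc : ∀ t ∈ I, HasDerivAt c
      (c t / 2 * ((a t) ^ 2 + (b t) ^ 2 + 2 * Real.exp (-A) * a t * b t - (c t) ^ 2)) t) :
    (∀ t ∈ I, HasDerivAt (fun s => -(a s) ^ 2 + (b s) ^ 2 + (c s) ^ 2)
      ((a t) ^ 4 - ((b t) ^ 2 - (c t) ^ 2) ^ 2
        + 2 * Real.exp (-A) * a t * b t * (c t) ^ 2) t) ∧
    ((∀ t ∈ I, 0 < a t) → (∀ t ∈ I, 0 < b t) → (∀ t ∈ I, 0 < c t) →
      ∀ t ∈ I, -(a t) ^ 2 + (b t) ^ 2 + (c t) ^ 2 < 0 →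
        0 < (a t) ^ 4 - ((b t) ^ 2 - (c t) ^ 2) ^ 2
          + 2 * Real.exp (-A) * a t * b t * (c t) ^ 2) := by
  constructor
  · intro t ht
    have h := (((ha t ht).fun_pow 2).fun_neg.fun_add ((hb t ht).fun_pow 2)).fun_add ((hc t ht).fun_pow 2)
    refine h.congr_deriv ?_
    ring
  · intro hpa hpb hpc t ht hneg
    have h1 := hpa t ht
    have h2 := hpb t ht
    have h3 := hpc t ht
    have he : 0 < Real.exp (-A) := Real.exp_pos _
    nlinarith [sq_nonneg (b t * c t), mul_pos (mul_pos (mul_pos he h1) h2) (pow_pos h3 2),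
      sq_nonneg (a t ^ 2 + b t ^ 2 + c t ^ 2)]
end

section
/- Let A ∈ ℝ and let a, b, c : I → ℝ be differentiable functions on an open interval satisfying the SU(2) centrally flat ODE system a' = (a/2)(−a² + b² + c²), b' = (b/2)(a² − b² + c²), c' = (c/2)(a² + b² + 2e^{−A}ab − c²). Then on I one has the identity (a² + b² + 2e^{−A}ab − c²)' = c⁴ − (a² − b²)². Consequently, if a, b, c are positive and a(t)² + b(t)² + 2e^{−A}a(t)b(t) − c(t)² < 0 at some point t ∈ I, then the derivative of a² + b² + 2e^{−A}ab − c² at t is strictly positive. -/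
/-- For the SU(2) centrally flat ODE system on an open interval `I`,
`(a² + b² + 2e^(−A)ab − c²)' = c⁴ − (a² − b²)²`; consequently, for positive solutions,
wherever `a² + b² + 2e^(−A)ab − c² < 0`, its derivative is strictly positive. -/
theorem su2_system_deriv_of_c_prime_quantity
    (A : ℝ) (I : Set ℝ) (hIopen : IsOpen I) (hIconn : I.OrdConnected)
    (a b c : ℝ → ℝ)
    (ha : ∀ t ∈ I, HasDerivAt a (a t / 2 * (-(a t) ^ 2 + (b t) ^ 2 + (c t) ^ 2)) t)
    (hb : ∀ t ∈ I, HasDerivAt b (b t / 2 * ((a t) ^ 2 - (b t) ^ 2 + (c t) ^ 2)) t)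
    (hc : ∀ t ∈ I, HasDerivAt c
      (c t / 2 * ((a t) ^ 2 + (b t) ^ 2 + 2 * Real.exp (-A) * a t * b t - (c t) ^ 2)) t) :
    (∀ t ∈ I, HasDerivAt
      (fun s => (a s) ^ 2 + (b s) ^ 2 + 2 * Real.exp (-A) * a s * b s - (c s) ^ 2)
      ((c t) ^ 4 - ((a t) ^ 2 - (b t) ^ 2) ^ 2) t) ∧
    ((∀ t ∈ I, 0 < a t) → (∀ t ∈ I, 0 < b t) → (∀ t ∈ I, 0 < c t) →
      ∀ t ∈ I, (a t) ^ 2 + (b t) ^ 2 + 2 * Real.exp (-A) * a t * b t - (c t) ^ 2 < 0 →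
        0 < (c t) ^ 4 - ((a t) ^ 2 - (b t) ^ 2) ^ 2) := by
  constructor
  · intro t ht
    have Ha := ha t ht
    have Hb := hb t ht
    have Hc := hc t ht
    have H := (((Ha.pow 2).add (Hb.pow 2)).add
      (((hasDerivAt_const t (2 * Real.exp (-A))).mul Ha).mul Hb)).sub (Hc.pow 2)
    refine H.congr_deriv ?_
    simp only [Pi.mul_apply]
    ring
  · intro hpa hpb hpc t ht hQ
    have h1 := hpa t ht
    have h2 := hpb t ht
    have h3 := hpc t ht
    have hE := Real.exp_pos (-A)
    nlinarith [mul_pos h1 h2, mul_pos hE (mul_pos h1 h2), sq_nonneg (a t - b t),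
      sq_nonneg (a t + b t), sq_nonneg (c t)]
end

section
/- Let A ∈ ℝ and let a, b, c : (ξ, η) → ℝ, with ξ finite, be a solution of the SU(2) centrally flat ODE system a' = (a/2)(−a² + b² + c²), b' = (b/2)(a² − b² + c²), c' = (c/2)(a² + b² + 2e^{−A}ab − c²), with a, b, c everywhere positive and a ≥ b on (ξ, η). Assume the solution is maximal, in the sense that it does not extend to a solution of the same system on any open interval strictly containing (ξ, η). Then b(t) → 0 as t → ξ from the right. -/
/-- The SU(2) centrally flat ODE system with parameter `A` on a set `J`:
`a' = (a/2)(−a² + b² + c²)`, `b' = (b/2)(a² − b² + c²)`,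
`c' = (c/2)(a² + b² + 2e^(−A)ab − c²)`. -/
def SU2CentrallyFlatSystem (A : ℝ) (a b c : ℝ → ℝ) (J : Set ℝ) : Prop :=
  (∀ t ∈ J, HasDerivAt a (a t / 2 * (-(a t) ^ 2 + (b t) ^ 2 + (c t) ^ 2)) t) ∧
  (∀ t ∈ J, HasDerivAt b (b t / 2 * ((a t) ^ 2 - (b t) ^ 2 + (c t) ^ 2)) t) ∧
  (∀ t ∈ J, HasDerivAt c
    (c t / 2 * ((a t) ^ 2 + (b t) ^ 2 + 2 * Real.exp (-A) * a t * b t - (c t) ^ 2)) t)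

/-- A solution of the SU(2) centrally flat ODE system on an open interval `I` is maximal
if it does not extend to a solution of the same system on any open interval strictly
containing `I`. -/
def SU2MaximalSolution (A : ℝ) (a b c : ℝ → ℝ) (I : Set ℝ) : Prop :=
  SU2CentrallyFlatSystem A a b c I ∧
  ∀ J : Set ℝ, IsOpen J → J.OrdConnected → I ⊆ J → I ≠ J →
    ¬ ∃ a' b' c' : ℝ → ℝ, SU2CentrallyFlatSystem A a' b' c' J ∧
      Set.EqOn a' a I ∧ Set.EqOn b' b I ∧ Set.EqOn c' c I

open Set Filter Real Metric
open scoped Topology NNReal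

noncomputable def Fv (A : ℝ) : ℝ × ℝ × ℝ → ℝ × ℝ × ℝ := fun p =>
  (p.1/2 * (-p.1^2 + p.2.1^2 + p.2.2^2),
   p.2.1/2 * (p.1^2 - p.2.1^2 + p.2.2^2),
   p.2.2/2 * (p.1^2 + p.2.1^2 + 2*Real.exp (-A)*p.1*p.2.1 - p.2.2^2))

lemma contDiff_Fv (A : ℝ) : ContDiff ℝ 1 (Fv A) := by
  unfold Fv; simp only [div_eq_mul_inv]; fun_prop

lemma monoOn_Ioo {f f' : ℝ → ℝ} {p q : ℝ} (h : ∀ t ∈ Ioo p q, HasDerivAt f (f' t) t)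
    (h0 : ∀ t ∈ Ioo p q, 0 ≤ f' t) : MonotoneOn f (Ioo p q) := by
  apply monotoneOn_of_hasDerivWithinAt_nonneg (f' := f') (convex_Ioo p q)
    (fun t ht => (h t ht).continuousAt.continuousWithinAt)
  · rw [interior_Ioo]; exact fun t ht => (h t ht).hasDerivWithinAt
  · rw [interior_Ioo]; exact h0

lemma antiOn_Ioo {f f' : ℝ → ℝ} {p q : ℝ} (h : ∀ t ∈ Ioo p q, HasDerivAt f (f' t) t)
    (h0 : ∀ t ∈ Ioo p q, f' t ≤ 0) : AntitoneOn f (Ioo p q) := by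
  apply antitoneOn_of_hasDerivWithinAt_nonpos (f' := f') (convex_Ioo p q)
    (fun t ht => (h t ht).continuousAt.continuousWithinAt)
  · rw [interior_Ioo]; exact fun t ht => (h t ht).hasDerivWithinAt
  · rw [interior_Ioo]; exact h0

/-- For a maximal positive solution with `a ≥ b` of the SU(2) centrally
flat system on an open interval `(ξ, η)` with finite left endpoint `ξ`, one has
`b(t) → 0` as `t → ξ⁺`. -/
theorem su2_maximal_finite_left_endpoint_b_tendsto_zero
    (A ξ : ℝ) (I : Set ℝ) (hIopen : IsOpen I) (hIconn : I.OrdConnected)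
    (hne : I.Nonempty) (hglb : IsGLB I ξ)
    (a b c : ℝ → ℝ)
    (hmax : SU2MaximalSolution A a b c I)
    (hapos : ∀ t ∈ I, 0 < a t) (hbpos : ∀ t ∈ I, 0 < b t) (hcpos : ∀ t ∈ I, 0 < c t)
    (hab : ∀ t ∈ I, b t ≤ a t) :
    Filter.Tendsto b (nhdsWithin ξ (Set.Ioi ξ)) (nhds 0) := by
  obtain ⟨⟨ha', hb', hc'⟩, hmax2⟩ := hmax
  -- basic interval facts
  have hIoi : I ⊆ Ioi ξ := by
    intro t ht
    rcases lt_or_eq_of_le (hglb.1 ht) with h | h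
    · exact h
    · exfalso
      subst h
      obtain ⟨δ, hδ, hball⟩ := Metric.isOpen_iff.1 hIopen ξ ht
      have h1 : ξ - δ/2 ∈ I := hball (by
        rw [mem_ball, Real.dist_eq,
          show ξ - δ/2 - ξ = -(δ/2) by ring, abs_neg, abs_of_nonneg (by linarith)]
        linarith)
      have := hglb.1 h1
      linarith
  have hsub : ∀ t ∈ I, Ioo ξ t ⊆ I := by
    intro t ht s hs
    have h1 : ¬ (s ∈ lowerBounds I) := fun h => absurd (hglb.2 h) (not_le.2 hs.1)
    simp only [lowerBounds, mem_setOf_eq, not_forall] at h1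
    obtain ⟨r, hr, hrs⟩ := h1
    exact hIconn.out hr ht ⟨le_of_not_ge hrs, hs.2.le⟩
  obtain ⟨t₂, ht₂⟩ := hne
  obtain ⟨T, hTI, hT2⟩ : ∃ T ∈ I, t₂ < T := by
    obtain ⟨δ, hδ, hball⟩ := Metric.isOpen_iff.1 hIopen t₂ ht₂
    refine ⟨t₂ + δ/2, hball ?_, by linarith⟩
    rw [mem_ball, Real.dist_eq, show t₂ + δ/2 - t₂ = δ/2 by ring, abs_of_nonneg (by linarith)]
    linarith
  have hΩI : Ioo ξ T ⊆ I := hsub T hTI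
  have hξT : ξ < T := hIoi hTI
  have ht₂Ω : t₂ ∈ Ioo ξ T := ⟨hIoi ht₂, hT2⟩
  -- b is monotone
  have hbmono : MonotoneOn b (Ioo ξ T) := by
    apply monoOn_Ioo (fun t ht => hb' t (hΩI ht))
    intro t ht
    have h1 := hapos t (hΩI ht); have h2 := hbpos t (hΩI ht)
    have h3 := hcpos t (hΩI ht); have h4 := hab t (hΩI ht)
    apply mul_nonneg (by linarith) (by nlinarith)
  have hφmono : MonotoneOn (fun t => a t * b t) (Ioo ξ T) := by
    apply monoOn_Ioo (f' := fun t => a t * b t * c t ^ 2)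
    · intro t ht
      have := (ha' t (hΩI ht)).mul (hb' t (hΩI ht))
      refine this.congr_deriv ?_; ring
    · intro t ht
      have h1 := hapos t (hΩI ht); have h2 := hbpos t (hΩI ht)
      positivity
  set L := sInf (b '' Ioo ξ T) with hLdef
  have hbdd : BddBelow (b '' Ioo ξ T) := ⟨0, fun y ⟨s, hs, hy⟩ => hy ▸ (hbpos s (hΩI hs)).le⟩
  have hbL : Tendsto b (𝓝[>] ξ) (𝓝 L) :=
    MonotoneOn.tendsto_nhdsWithin_Ioo_right ⟨t₂, ht₂Ω⟩ hbmono hbdd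
  have hLb : ∀ s ∈ Ioo ξ T, L ≤ b s := fun s hs => csInf_le hbdd (mem_image_of_mem b hs)
  have hL0 : 0 ≤ L := le_csInf ⟨b t₂, mem_image_of_mem b ht₂Ω⟩
    (fun y ⟨s, hs, hy⟩ => hy ▸ (hbpos s (hΩI hs)).le)
  rcases eq_or_lt_of_le hL0 with hL | hL
  · rw [hL]; exact hbL
  exfalso
  -- common machinery: u = 1/c², and t ↦ u t - t is antitone
  set u : ℝ → ℝ := fun t => (c t ^ 2)⁻¹ with hudef
  have hcne : ∀ t ∈ I, c t ≠ 0 := fun t ht => ne_of_gt (hcpos t ht)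
  have hu' : ∀ t ∈ I, HasDerivAt u
      (1 - (a t ^ 2 + b t ^ 2 + 2 * Real.exp (-A) * a t * b t) * u t) t := by
    intro t ht
    have h2 : HasDerivAt (fun s => c s ^ 2)
        ((2 : ℕ) * c t ^ 1 * (c t / 2 * (a t ^ 2 + b t ^ 2 + 2 * Real.exp (-A) * a t * b t
          - c t ^ 2))) t := (hc' t ht).pow 2
    have h3 := h2.inv (pow_ne_zero 2 (hcne t ht))
    have hc0 := hcne t ht
    have hc2 : c t ^ 2 ≠ 0 := pow_ne_zero 2 hc0
    have hval : -(((2:ℕ):ℝ) * c t ^ 1 * (c t / 2 * (a t ^ 2 + b t ^ 2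
          + 2 * Real.exp (-A) * a t * b t - c t ^ 2))) / (c t ^ 2) ^ 2
        = 1 - (a t ^ 2 + b t ^ 2 + 2 * Real.exp (-A) * a t * b t) * (c t ^ 2)⁻¹ := by
      rw [div_eq_iff (by positivity)]
      push_cast
      field_simp
      ring
    have goal' : HasDerivAt (fun s => (c s ^ 2)⁻¹) (1 - (a t ^ 2 + b t ^ 2
        + 2 * Real.exp (-A) * a t * b t) * (c t ^ 2)⁻¹) t := by
      rw [← hval]; exact h3
    rw [hudef]
    exact goal'
  have hupos : ∀ t ∈ I, 0 < u t := by
    intro t ht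
    have := hcpos t ht
    simp only [hudef]
    positivity
  have hw_anti : AntitoneOn (fun t => u t - t) (Ioo ξ T) := by
    apply antiOn_Ioo (f' := fun t =>
      (1 - (a t ^ 2 + b t ^ 2 + 2 * Real.exp (-A) * a t * b t) * u t) - 1)
    · exact fun t ht => (hu' t (hΩI ht)).sub (hasDerivAt_id t)
    · intro t ht
      have h1 := hapos t (hΩI ht); have h2 := hbpos t (hΩI ht)
      have h3 := hupos t (hΩI ht)
      have h4 : 0 < a t ^ 2 + b t ^ 2 + 2 * Real.exp (-A) * a t * b t := by
        nlinarith [mul_pos (mul_pos (Real.exp_pos (-A)) h1) h2, sq_nonneg (a t), sq_nonneg (b t)]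
      nlinarith [mul_pos h4 h3]
  by_cases hcb : ∃ C₀ : ℝ, ∀ s ∈ Ioo ξ T, c s ≤ C₀
  · -- Case A: c bounded near ξ; the solution extends, contradicting maximality
    obtain ⟨C₀, hC₀⟩ := hcb
    have hx' : ∀ t ∈ I, HasDerivAt (fun s => (a s, b s, c s)) (Fv A (a t, b t, c t)) t := by
      intro t ht
      exact (ha' t ht).prodMk ((hb' t ht).prodMk (hc' t ht))
    have hC₀pos : 0 < C₀ := lt_of_lt_of_le (hcpos t₂ ht₂) (hC₀ t₂ ht₂Ω)
    have hu_lb : ∀ s ∈ Ioo ξ T, (C₀ ^ 2)⁻¹ ≤ u s := by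
      intro s hs
      have h1 := hcpos s (hΩI hs); have h2 := hC₀ s hs
      have h3 : c s ^ 2 ≤ C₀ ^ 2 := by nlinarith
      calc (C₀ ^ 2)⁻¹ ≤ (c s ^ 2)⁻¹ := inv_anti₀ (by positivity) h3
        _ = u s := rfl
    -- limits of a, b, c at ξ from the right
    set P := sInf ((fun t => a t * b t) '' Ioo ξ T) with hPdef
    have hPbdd : BddBelow ((fun t => a t * b t) '' Ioo ξ T) := by
      refine ⟨0, ?_⟩
      rintro y ⟨s, hs, rfl⟩
      exact mul_nonneg (hapos s (hΩI hs)).le (hbpos s (hΩI hs)).le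
    have hφL : Tendsto (fun t => a t * b t) (𝓝[>] ξ) (𝓝 P) :=
      MonotoneOn.tendsto_nhdsWithin_Ioo_right ⟨t₂, ht₂Ω⟩ hφmono hPbdd
    have haL : Tendsto a (𝓝[>] ξ) (𝓝 (P / L)) := by
      have h1 : Tendsto (fun t => (a t * b t) / b t) (𝓝[>] ξ) (𝓝 (P / L)) :=
        hφL.div hbL (ne_of_gt hL)
      apply Filter.Tendsto.congr' _ h1
      filter_upwards [Ioo_mem_nhdsGT_of_mem (left_mem_Ico.2 hξT)] with s hs
      have := hbpos s (hΩI hs)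
      field_simp
    have hc_eq : c =ᶠ[𝓝[>] ξ] (fun s => Real.sqrt ((u s)⁻¹)) := by
      filter_upwards [Ioo_mem_nhdsGT_of_mem (left_mem_Ico.2 hξT)] with s hs
      have h1 := hcpos s (hΩI hs)
      rw [show (u s)⁻¹ = c s ^ 2 by simp [hudef], Real.sqrt_sq h1.le]
    obtain ⟨c₀, hcL⟩ : ∃ c₀, Tendsto c (𝓝[>] ξ) (𝓝 c₀) := by
      by_cases hWb : BddAbove ((fun t => u t - t) '' Ioo ξ T)
      · have hwlim : Tendsto (fun t => u t - t) (𝓝[>] ξ)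
            (𝓝 (sSup ((fun t => u t - t) '' Ioo ξ T))) :=
          AntitoneOn.tendsto_nhdsWithin_Ioo_right ⟨t₂, ht₂Ω⟩ hw_anti hWb
        set Q := sSup ((fun t => u t - t) '' Ioo ξ T) with hQdef
        have hid : Tendsto (fun s : ℝ => s) (𝓝[>] ξ) (𝓝 ξ) :=
          (continuous_id.tendsto ξ).mono_left nhdsWithin_le_nhds
        have hulim : Tendsto u (𝓝[>] ξ) (𝓝 (Q + ξ)) := by
          have := hwlim.add hid
          simpa using this
        have hQpos : 0 < Q + ξ := by
          have h4 : (C₀ ^ 2)⁻¹ ≤ Q + ξ := by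
            apply ge_of_tendsto hulim
            filter_upwards [Ioo_mem_nhdsGT_of_mem (left_mem_Ico.2 hξT)] with s hs
            exact hu_lb s hs
          have h5 : (0:ℝ) < (C₀ ^ 2)⁻¹ := by positivity
          linarith
        refine ⟨Real.sqrt ((Q + ξ)⁻¹), ?_⟩
        have h2 : Tendsto (fun s => Real.sqrt ((u s)⁻¹)) (𝓝[>] ξ)
            (𝓝 (Real.sqrt ((Q + ξ)⁻¹))) :=
          (Real.continuous_sqrt.tendsto _).comp (hulim.inv₀ (ne_of_gt hQpos))
        exact Filter.Tendsto.congr' hc_eq.symm h2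
      · have hutop : Tendsto u (𝓝[>] ξ) atTop := by
          rw [Filter.tendsto_atTop]
          intro C
          obtain ⟨y, hy, hyC⟩ := not_bddAbove_iff.1 hWb (C - ξ)
          obtain ⟨s, hs, rfl⟩ := hy
          filter_upwards [Ioo_mem_nhdsGT_of_mem (left_mem_Ico.2 hs.1)] with t ht
          have h1 : u s - s ≤ u t - t := hw_anti ⟨ht.1, ht.2.trans hs.2⟩ hs ht.2.le
          have h2 : ξ < t := ht.1
          simp only at hyC
          linarith
        refine ⟨0, ?_⟩
        have h3 : Tendsto (fun s => (u s)⁻¹) (𝓝[>] ξ) (𝓝 0) :=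
          tendsto_inv_atTop_zero.comp hutop
        have h2 : Tendsto (fun s => Real.sqrt ((u s)⁻¹)) (𝓝[>] ξ) (𝓝 0) := by
          have h4 := (Real.continuous_sqrt.tendsto 0).comp h3
          rw [Real.sqrt_zero] at h4
          exact h4
        exact Filter.Tendsto.congr' hc_eq.symm h2
    set x₀ : ℝ × ℝ × ℝ := (P / L, L, c₀) with hx₀def
    have hxL : Tendsto (fun s => (a s, b s, c s)) (𝓝[>] ξ) (𝓝 x₀) :=
      haL.prodMk_nhds (hbL.prodMk_nhds hcL)
    -- local solution through x₀ at time ξ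
    obtain ⟨f, hf0, ε, hε, hf⟩ :=
      ContDiffAt.exists_forall_mem_closedBall_exists_eq_forall_mem_Ioo_hasDerivAt₀ (x₀ := x₀) (t₀ := ξ) (contDiff_Fv A).contDiffAt
    obtain ⟨K, s₀, hs₀, hlip₀⟩ := (contDiff_Fv A).contDiffAt.exists_lipschitzOnWith (x := x₀)
    obtain ⟨r₀, hr₀, hball⟩ := Metric.mem_nhds_iff.1 hs₀
    have hr : 0 < r₀/2 := by linarith
    have hlip : LipschitzOnWith K (Fv A) (closedBall x₀ (r₀/2)) :=
      hlip₀.mono ((closedBall_subset_ball (by linarith)).trans hball)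
    have hxev := hxL (Metric.closedBall_mem_nhds x₀ hr)
    rw [Filter.mem_map, mem_nhdsGT_iff_exists_Ioo_subset] at hxev
    obtain ⟨m₁, hm₁, hm₁sub⟩ := hxev
    have hfc : ContinuousAt f ξ :=
      (hf ξ (by constructor <;> linarith)).continuousAt
    have hfev : ∀ᶠ t in 𝓝 ξ, f t ∈ closedBall x₀ (r₀/2) := by
      apply hfc
      rw [hf0]
      exact Metric.closedBall_mem_nhds x₀ hr
    obtain ⟨δ, hδ, hδsub⟩ := Metric.eventually_nhds_iff.1 hfev
    set m := min (min m₁ ((ξ + T)/2)) (min (ξ + ε/2) (ξ + δ/2)) with hmdef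
    have hm₁' : ξ < m₁ := hm₁
    have hmξ : ξ < m :=
      lt_min (lt_min hm₁' (by linarith)) (lt_min (by linarith) (by linarith))
    have hmT : m < T := by
      have h1 : m ≤ (ξ + T)/2 := (min_le_left _ _).trans (min_le_right _ _)
      linarith
    have hmΩ : m ∈ Ioo ξ T := ⟨hmξ, hmT⟩
    have hmI : m ∈ I := hΩI hmΩ
    have hmε : m ≤ ξ + ε/2 := (min_le_right _ _).trans (min_le_left _ _)
    have hmδ : m ≤ ξ + δ/2 := (min_le_right _ _).trans (min_le_right _ _)
    have hmm₁ : m ≤ m₁ := (min_le_left _ _).trans (min_le_left _ _)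
    have hxball : ∀ t ∈ Ioo ξ m, (a t, b t, c t) ∈ closedBall x₀ (r₀/2) :=
      fun t ht => hm₁sub ⟨ht.1, lt_of_lt_of_le ht.2 hmm₁⟩
    have hfball : ∀ t ∈ Icc ξ m, f t ∈ closedBall x₀ (r₀/2) := by
      intro t ht
      apply hδsub
      rw [Real.dist_eq, abs_of_nonneg (by linarith [ht.1] : (0:ℝ) ≤ t - ξ)]
      have := ht.2
      linarith
    have hIccIoo : Icc ξ m ⊆ Ioo (ξ - ε) (ξ + ε) := by
      intro t ht
      constructor
      · linarith [ht.1]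
      · have := ht.2; linarith
    -- the curve extended by its limit value
    set xb : ℝ → ℝ × ℝ × ℝ := fun t => if ξ < t then (a t, b t, c t) else x₀ with hxbdef
    have hxbx : ∀ t, ξ < t → xb t = (a t, b t, c t) := fun t ht => if_pos ht
    have hxbξ : xb ξ = x₀ := if_neg (lt_irrefl ξ)
    have hxbcongr : ∀ t : ℝ, ξ < t → xb =ᶠ[𝓝 t] (fun s => (a s, b s, c s)) := by
      intro t ht
      filter_upwards [Ioi_mem_nhds ht] with s hs
      exact hxbx s hs
    have hxbtendsto : Tendsto xb (𝓝[>] ξ) (𝓝 x₀) := by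
      apply Filter.Tendsto.congr' _ hxL
      filter_upwards [self_mem_nhdsWithin] with s hs
      exact (hxbx s hs).symm
    -- uniqueness: xb = f on [ξ, s] for every s < m
    have hequn : ∀ s ∈ Ioo ξ m, Set.EqOn xb f (Icc ξ s) := by
      intro s hs
      have hsm : s < m := hs.2
      have hIoosub : ∀ t, ξ < t → t ≤ s → t ∈ I := by
        intro t h1 h2
        exact hΩI ⟨h1, by linarith [hmT]⟩
      apply ODE_solution_unique_of_mem_Icc_right (v := fun _ => Fv A)
        (s := fun _ => closedBall x₀ (r₀/2)) (K := K) (fun _ _ => hlip)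
      · -- ContinuousOn xb (Icc ξ s)
        intro t ht
        rcases eq_or_lt_of_le ht.1 with h | h
        · subst h
          have h1 : ContinuousWithinAt xb (Ioi ξ) ξ := by
            show Tendsto xb (𝓝[Ioi ξ] ξ) (𝓝 (xb ξ))
            rw [hxbξ]
            exact hxbtendsto
          have h2 : ContinuousWithinAt xb (insert ξ (Ioi ξ)) ξ :=
            continuousWithinAt_insert_self.2 h1
          apply h2.mono
          intro y hy
          rcases eq_or_lt_of_le hy.1 with h3 | h3
          · exact Or.inl h3.symm
          · exact Or.inr h3
        · have htI : t ∈ I := hIoosub t h ht.2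
          have h2 : ContinuousAt (fun s => (a s, b s, c s)) t := (hx' t htI).continuousAt
          exact (h2.congr (hxbcongr t h).symm).continuousWithinAt
      · -- HasDerivWithinAt on Ico
        intro t ht
        rcases eq_or_lt_of_le ht.1 with h | h
        · subst h
          have hderiv : HasDerivWithinAt xb (Fv A x₀) (Ici ξ) ξ := by
            apply hasDerivWithinAt_Ici_of_tendsto_deriv (s := Ioo ξ m)
            · intro y hy
              have hyI : y ∈ I := hΩI ⟨hy.1, hy.2.trans hmT⟩
              exact (((hx' y hyI).congr_of_eventuallyEq
                (hxbcongr y hy.1))).differentiableAt.differentiableWithinAt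
            · have h1 : Tendsto xb (𝓝[Ioo ξ m] ξ) (𝓝 x₀) :=
                hxbtendsto.mono_left (nhdsWithin_mono ξ Ioo_subset_Ioi_self)
              show Tendsto xb (𝓝[Ioo ξ m] ξ) (𝓝 (xb ξ))
              rw [hxbξ]
              exact h1
            · exact Ioo_mem_nhdsGT_of_mem ⟨le_refl ξ, hmξ⟩
            · have h5 : Tendsto (fun y => Fv A (a y, b y, c y)) (𝓝[>] ξ) (𝓝 (Fv A x₀)) :=
                ((contDiff_Fv A).continuous.tendsto x₀).comp hxL
              apply Filter.Tendsto.congr' _ h5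
              filter_upwards [Ioo_mem_nhdsGT_of_mem (left_mem_Ico.2 hmξ)] with y hy
              have hyI : y ∈ I := hΩI ⟨hy.1, hy.2.trans hmT⟩
              exact ((hx' y hyI).congr_of_eventuallyEq (hxbcongr y hy.1)).deriv.symm
          have hgoal : Fv A (xb ξ) = Fv A x₀ := by rw [hxbξ]
          rw [hgoal]
          exact hderiv
        · have htI : t ∈ I := hIoosub t h ht.2.le
          have h1 : HasDerivAt xb (Fv A (a t, b t, c t)) t :=
            (hx' t htI).congr_of_eventuallyEq (hxbcongr t h)
          rw [hxbx t h]
          exact h1.hasDerivWithinAt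
      · -- membership xb
        intro t ht
        rcases eq_or_lt_of_le ht.1 with h | h
        · subst h
          rw [hxbξ]
          exact mem_closedBall_self hr.le
        · rw [hxbx t h]
          exact hxball t ⟨h, ht.2.trans hsm⟩
      · -- ContinuousOn f
        intro t ht
        exact (hf t (hIccIoo ⟨ht.1, ht.2.trans hsm.le⟩)).continuousAt.continuousWithinAt
      · intro t ht
        exact (hf t (hIccIoo ⟨ht.1, (ht.2.le.trans hsm.le)⟩)).hasDerivWithinAt
      · intro t ht
        exact hfball t ⟨ht.1, ht.2.le.trans hsm.le⟩
      · rw [hxbξ, hf0]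
    have hfeq : ∀ t ∈ Ioo ξ m, (a t, b t, c t) = f t := by
      intro t ht
      have h1 := hequn t ht (right_mem_Icc.2 ht.1.le)
      rwa [hxbx t ht.1] at h1
    -- build the extension and contradict maximality
    have hJopen : IsOpen (I ∪ Ioo (ξ - ε/2) m) := hIopen.union isOpen_Ioo
    have hξJ : ξ ∈ I ∪ Ioo (ξ - ε/2) m := Or.inr ⟨by linarith, hmξ⟩
    have hJne : I ≠ I ∪ Ioo (ξ - ε/2) m := by
      intro h
      rw [← h] at hξJ
      exact absurd (hIoi hξJ) (lt_irrefl ξ)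
    have hJconn : (I ∪ Ioo (ξ - ε/2) m).OrdConnected := by
      constructor
      intro p hp q hq z hz
      by_cases hzm : z < m
      · right
        have h1 : ξ - ε/2 < p := by
          rcases hp with h | h
          · have := hIoi h
            simp only [mem_Ioi] at this
            linarith
          · exact h.1
        exact ⟨by linarith [hz.1], hzm⟩
      · left
        push_neg at hzm
        have hq' : q ∈ I := by
          rcases hq with h | h
          · exact h
          · exfalso
            have := h.2
            have := hz.2
            linarith
        exact hIconn.out hmI hq' ⟨hzm, hz.2⟩
    apply hmax2 _ hJopen hJconn subset_union_left hJne
    have hmemI : ∀ t ∈ I ∪ Ioo (ξ - ε/2) m, ξ < t → t ∈ I := by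
      intro t htJ h
      rcases htJ with h' | h'
      · exact h'
      · exact hΩI ⟨h, h'.2.trans hmT⟩
    have hmemf : ∀ t ∈ I ∪ Ioo (ξ - ε/2) m, ¬ ξ < t → t ∈ Ioo (ξ - ε) (ξ + ε) ∧ t ∈ Ioo (ξ - ε/2) m := by
      intro t htJ h
      have h' : t ∈ Ioo (ξ - ε/2) m := by
        rcases htJ with h'' | h''
        · exact absurd (hIoi h'') h
        · exact h''
      exact ⟨⟨by linarith [h'.1], by linarith [h'.2, hmε]⟩, h'⟩
    refine ⟨fun t => if ξ < t then a t else (f t).1,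
            fun t => if ξ < t then b t else (f t).2.1,
            fun t => if ξ < t then c t else (f t).2.2, ⟨?_, ?_, ?_⟩,
            fun t ht => if_pos (hIoi ht), fun t ht => if_pos (hIoi ht),
            fun t ht => if_pos (hIoi ht)⟩
    · intro t htJ
      by_cases h : ξ < t
      · have htI : t ∈ I := hmemI t htJ h
        have h1 : HasDerivAt (fun s => if ξ < s then a s else (f s).1)
            (a t / 2 * (-(a t)^2 + (b t)^2 + (c t)^2)) t :=
          (ha' t htI).congr_of_eventuallyEq
            (by filter_upwards [Ioi_mem_nhds h] with s hs; exact if_pos hs)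
        simpa only [if_pos h] using h1
      · obtain ⟨htε, htIoo⟩ := hmemf t htJ h
        have h1 : HasDerivAt (fun s => (f s).1) ((Fv A (f t)).1) t := (hf t htε).fst
        have h2 : HasDerivAt (fun s => if ξ < s then a s else (f s).1) ((Fv A (f t)).1) t := by
          apply h1.congr_of_eventuallyEq
          filter_upwards [isOpen_Ioo.mem_nhds htIoo] with s hs
          by_cases h3 : ξ < s
          · rw [if_pos h3]
            exact congrArg Prod.fst (hfeq s ⟨h3, hs.2⟩)
          · rw [if_neg h3]
        simp only [if_neg h]
        convert h2 using 1
        rfl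
    · intro t htJ
      by_cases h : ξ < t
      · have htI : t ∈ I := hmemI t htJ h
        have h1 : HasDerivAt (fun s => if ξ < s then b s else (f s).2.1)
            (b t / 2 * ((a t)^2 - (b t)^2 + (c t)^2)) t :=
          (hb' t htI).congr_of_eventuallyEq
            (by filter_upwards [Ioi_mem_nhds h] with s hs; exact if_pos hs)
        simpa only [if_pos h] using h1
      · obtain ⟨htε, htIoo⟩ := hmemf t htJ h
        have h1 : HasDerivAt (fun s => (f s).2.1) ((Fv A (f t)).2.1) t := (hf t htε).snd.fst
        have h2 : HasDerivAt (fun s => if ξ < s then b s else (f s).2.1) ((Fv A (f t)).2.1) t := by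
          apply h1.congr_of_eventuallyEq
          filter_upwards [isOpen_Ioo.mem_nhds htIoo] with s hs
          by_cases h3 : ξ < s
          · rw [if_pos h3]
            exact congrArg (fun p : ℝ × ℝ × ℝ => p.2.1) (hfeq s ⟨h3, hs.2⟩)
          · rw [if_neg h3]
        simp only [if_neg h]
        convert h2 using 1
        rfl
    · intro t htJ
      by_cases h : ξ < t
      · have htI : t ∈ I := hmemI t htJ h
        have h1 : HasDerivAt (fun s => if ξ < s then c s else (f s).2.2)
            (c t / 2 * ((a t)^2 + (b t)^2 + 2 * Real.exp (-A) * a t * b t - (c t)^2)) t :=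
          (hc' t htI).congr_of_eventuallyEq
            (by filter_upwards [Ioi_mem_nhds h] with s hs; exact if_pos hs)
        simpa only [if_pos h] using h1
      · obtain ⟨htε, htIoo⟩ := hmemf t htJ h
        have h1 : HasDerivAt (fun s => (f s).2.2) ((Fv A (f t)).2.2) t := (hf t htε).snd.snd
        have h2 : HasDerivAt (fun s => if ξ < s then c s else (f s).2.2) ((Fv A (f t)).2.2) t := by
          apply h1.congr_of_eventuallyEq
          filter_upwards [isOpen_Ioo.mem_nhds htIoo] with s hs
          by_cases h3 : ξ < s
          · rw [if_pos h3]
            exact congrArg (fun p : ℝ × ℝ × ℝ => p.2.2) (hfeq s ⟨h3, hs.2⟩)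
          · rw [if_neg h3]
        simp only [if_neg h]
        convert h2 using 1
        rfl
  · -- Case B: c unbounded near ξ
    push_neg at hcb
    -- points with small u arbitrarily close to ξ
    have hsmall : ∀ ε > (0:ℝ), ∀ d ∈ Ioo ξ T, ∃ s ∈ Ioo ξ T, s < d ∧ u s < ε := by
      intro ε hε d hd
      have hcompact : IsCompact (Icc d T) := isCompact_Icc
      have hIccI : Icc d T ⊆ I := fun s hs => hIconn.out (hΩI hd) hTI hs
      have hcont : ContinuousOn c (Icc d T) :=
        fun s hs => (hc' s (hIccI hs)).continuousAt.continuousWithinAt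
      obtain ⟨B, hB⟩ : ∃ B, ∀ s ∈ Icc d T, c s ≤ B := by
        obtain ⟨s₀, _, hs₀⟩ := hcompact.exists_isMaxOn ⟨d, le_refl d, hd.2.le⟩ hcont
        exact ⟨c s₀, hs₀⟩
      obtain ⟨s, hs, hcs⟩ := hcb (max B (Real.sqrt ε)⁻¹)
      have hsd : s < d := by
        by_contra hsd
        push_neg at hsd
        exact absurd ((hB s ⟨hsd, hs.2.le⟩).trans (le_max_left _ _)) (not_le.2 hcs)
      refine ⟨s, hs, hsd, ?_⟩
      have hsq : 0 < Real.sqrt ε := Real.sqrt_pos.2 hε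
      have h1 : (Real.sqrt ε)⁻¹ < c s := lt_of_le_of_lt (le_max_right _ _) hcs
      have h2 : ε⁻¹ < c s ^ 2 := by
        rw [← Real.sq_sqrt hε.le, ← inv_pow]
        exact pow_lt_pow_left₀ h1 (by positivity) (by norm_num)
      simpa [hudef] using inv_lt_of_inv_lt₀ hε h2
    have hkey : ∀ s ∈ Ioo ξ T, u s ≤ s - ξ := by
      intro s hs
      refine le_of_forall_pos_le_add ?_
      intro ε hε
      obtain ⟨t, ht, hts, hut⟩ := hsmall ε hε s hs
      have h1 : u s - s ≤ u t - t := hw_anti ht hs hts.le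
      have h2 : ξ < t := ht.1
      linarith
    have hc2 : ∀ s ∈ Ioo ξ T, (s - ξ)⁻¹ ≤ c s ^ 2 := by
      intro s hs
      have h1 := hkey s hs
      have h3 := hupos s (hΩI hs)
      calc (s - ξ)⁻¹ ≤ (u s)⁻¹ := inv_anti₀ h3 h1
        _ = c s ^ 2 := by simp [hudef]
    set g : ℝ → ℝ := fun t => Real.log (b t) - 1/2 * Real.log (t - ξ) with hgdef
    have hg' : ∀ t ∈ Ioo ξ T, HasDerivAt g
        ((a t ^ 2 - b t ^ 2 + c t ^ 2)/2 - 1/2 * (t - ξ)⁻¹) t := by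
      intro t ht
      have hb0 : b t ≠ 0 := ne_of_gt (hbpos t (hΩI ht))
      have ht0 : t - ξ ≠ 0 := ne_of_gt (sub_pos.2 ht.1)
      have h1 : HasDerivAt (fun s => Real.log (b s))
          ((b t / 2 * (a t ^ 2 - b t ^ 2 + c t ^ 2)) / b t) t := (hb' t (hΩI ht)).log hb0
      have h2 : HasDerivAt (fun s : ℝ => s - ξ) 1 t := (hasDerivAt_id t).sub_const ξ
      have h3 : HasDerivAt (fun s : ℝ => Real.log (s - ξ)) (1 / (t - ξ)) t := h2.log ht0
      have h4 := h1.sub (h3.const_mul (1/2 : ℝ))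
      refine h4.congr_deriv ?_
      field_simp
    have hgmono : MonotoneOn g (Ioo ξ T) := by
      apply monoOn_Ioo hg'
      intro t ht
      have h1 := hc2 t ht
      have h2 := hab t (hΩI ht)
      have h3 := hbpos t (hΩI ht)
      have h4 : b t ^ 2 ≤ a t ^ 2 := by nlinarith
      linarith
    set t₃ := (ξ + T)/2 with ht₃def
    have ht₃ : t₃ ∈ Ioo ξ T := ⟨by simp only [ht₃def]; linarith, by simp only [ht₃def]; linarith⟩
    set δ := min (Real.exp (2*(Real.log L - g t₃) - 1)) (t₃ - ξ) with hδdef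
    have hδpos : 0 < δ := lt_min (Real.exp_pos _) (by simp only [ht₃def]; linarith)
    set t := ξ + δ/2 with htdef
    have htΩ : t ∈ Ioo ξ T := by
      constructor
      · simp only [htdef]; linarith
      · have : δ ≤ t₃ - ξ := min_le_right _ _
        simp only [htdef, ht₃def] at *
        linarith
    have htt₃ : t ≤ t₃ := by
      have : δ ≤ t₃ - ξ := min_le_right _ _
      simp only [htdef]; linarith
    have h1 : g t ≤ g t₃ := hgmono htΩ ht₃ htt₃
    have h2 : Real.log L ≤ Real.log (b t) := Real.log_le_log hL (hLb t htΩ)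
    have h3 : Real.log (t - ξ) < 2*(Real.log L - g t₃) := by
      have ht' : t - ξ = δ/2 := by simp only [htdef]; ring
      have hlt : t - ξ < Real.exp (2*(Real.log L - g t₃) - 1) :=
        ht' ▸ lt_of_lt_of_le (by linarith) (min_le_left _ _)
      calc Real.log (t - ξ) < Real.log (Real.exp (2*(Real.log L - g t₃) - 1)) :=
            Real.log_lt_log (by rw [ht']; positivity) hlt
        _ = 2*(Real.log L - g t₃) - 1 := Real.log_exp _
        _ < 2*(Real.log L - g t₃) := by linarith
    have h1' : Real.log (b t) - 1/2 * Real.log (t - ξ) ≤ g t₃ := h1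
    clear_value L g δ t
    linarith only [h1', h2, h3]
end

section
/- Let A ∈ ℝ and let a, b, c : (ξ, η) → ℝ, with ξ finite, be a maximal solution of the SU(2) centrally flat ODE system a' = (a/2)(−a² + b² + c²), b' = (b/2)(a² − b² + c²), c' = (c/2)(a² + b² + 2e^{−A}ab − c²), with a, b, c everywhere positive and a ≥ b on (ξ, η). Then for any t₁ ∈ (ξ, η), the integral ∫_{ξ}^{t₁} a(t)·b(t)·c(t) dt is finite. (Geometrically: the corresponding cohomogeneity one metric g = (abc)²dt² + a²σ₁² + b²σ₂² + c²σ₃² is incomplete at t = ξ.) -/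
/-- For a maximal positive solution with `a ≥ b` of the SU(2) centrally
flat system on an open interval `(ξ, η)` with finite left endpoint `ξ`, the integral
`∫_ξ^{t₁} a·b·c dt` is finite for any `t₁` in the interval; i.e. the corresponding
cohomogeneity one metric is incomplete at `t = ξ`. -/
theorem su2_maximal_finite_left_endpoint_incomplete
    (A ξ : ℝ) (I : Set ℝ) (hIopen : IsOpen I) (hIconn : I.OrdConnected)
    (hne : I.Nonempty) (hglb : IsGLB I ξ)
    (a b c : ℝ → ℝ)
    (hmax : SU2MaximalSolution A a b c I)
    (hapos : ∀ t ∈ I, 0 < a t) (hbpos : ∀ t ∈ I, 0 < b t) (hcpos : ∀ t ∈ I, 0 < c t)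
    (hab : ∀ t ∈ I, b t ≤ a t)
    (t₁ : ℝ) (ht₁ : t₁ ∈ I) :
    MeasureTheory.IntegrableOn (fun t => a t * b t * c t) (Set.Ioo ξ t₁) := by
  obtain ⟨⟨ha, hb, hc⟩, -⟩ := hmax
  -- the interval (ξ, t₁] is contained in I
  have hsub : Set.Ioc ξ t₁ ⊆ I := by
    rintro t ⟨ht1, ht2⟩
    have hnlb : t ∉ lowerBounds I := fun h => absurd (hglb.2 h) (not_le.mpr ht1)
    obtain ⟨s, hs, hst⟩ : ∃ s ∈ I, ¬ t ≤ s := by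
      simpa [lowerBounds] using hnlb
    exact hIconn.out hs ht₁ ⟨le_of_lt (not_le.mp hst), ht2⟩
  set F : ℝ → ℝ := fun t => a t * b t * c t with hFdef
  -- derivative of F
  have hF : ∀ t ∈ I, HasDerivAt F
      ((a t / 2 * (-(a t) ^ 2 + (b t) ^ 2 + (c t) ^ 2) * b t +
        a t * (b t / 2 * ((a t) ^ 2 - (b t) ^ 2 + (c t) ^ 2))) * c t +
        a t * b t *
          (c t / 2 * ((a t) ^ 2 + (b t) ^ 2 + 2 * Real.exp (-A) * a t * b t - (c t) ^ 2))) t :=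
    fun t ht => ((ha t ht).mul (hb t ht)).mul (hc t ht)
  have hFpos : ∀ t ∈ I, 0 < F t := fun t ht =>
    mul_pos (mul_pos (hapos t ht) (hbpos t ht)) (hcpos t ht)
  -- the derivative is positive on I
  have hDpos : ∀ t ∈ I,
      0 < (a t / 2 * (-(a t) ^ 2 + (b t) ^ 2 + (c t) ^ 2) * b t +
        a t * (b t / 2 * ((a t) ^ 2 - (b t) ^ 2 + (c t) ^ 2))) * c t +
        a t * b t *
          (c t / 2 * ((a t) ^ 2 + (b t) ^ 2 + 2 * Real.exp (-A) * a t * b t - (c t) ^ 2)) := by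
    intro t ht
    have hA := hapos t ht
    have hB := hbpos t ht
    have hC := hcpos t ht
    have hE : 0 < Real.exp (-A) := Real.exp_pos _
    nlinarith [mul_pos (mul_pos hA hB) hC, mul_pos hA hB, sq_nonneg (a t), sq_nonneg (b t),
      sq_nonneg (c t), mul_pos (mul_pos (mul_pos hA hB) hC) (mul_pos hA hB),
      mul_pos (mul_pos (mul_pos hA hB) hC) (mul_pos hA hA),
      mul_pos (mul_pos (mul_pos hA hB) hC) (mul_pos hB hB),
      mul_pos (mul_pos (mul_pos hA hB) hC) (mul_pos hC hC),
      mul_pos hE (mul_pos (mul_pos (mul_pos hA hB) hC) (mul_pos hA hB))]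
  rcases eq_or_lt_of_le (hglb.1 ht₁) with hxt | hxt
  · rw [← hxt, Set.Ioo_self]
    simp [MeasureTheory.IntegrableOn]
  -- F is strictly monotone on (ξ, t₁]
  have hcont : ContinuousOn F (Set.Ioc ξ t₁) := fun t ht =>
    ((hF t (hsub ht)).continuousAt).continuousWithinAt
  have hmono : StrictMonoOn F (Set.Ioc ξ t₁) := by
    apply strictMonoOn_of_deriv_pos (convex_Ioc ξ t₁) hcont
    intro t ht
    rw [interior_Ioc] at ht
    have htI : t ∈ I := hsub (Set.Ioo_subset_Ioc_self ht)
    rw [(hF t htI).deriv]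
    exact hDpos t htI
  -- conclude integrability: F is bounded by F t₁ on a finite-measure set
  have ht₁mem : t₁ ∈ Set.Ioc ξ t₁ := ⟨hxt, le_refl t₁⟩
  apply MeasureTheory.Integrable.mono'
    (g := fun _ => F t₁) ((MeasureTheory.integrableOn_const_iff (hC := by finiteness)).mpr (Or.inr measure_Ioo_lt_top))
  · exact (hcont.mono Set.Ioo_subset_Ioc_self).aestronglyMeasurable measurableSet_Ioo
  · rw [MeasureTheory.ae_restrict_iff' measurableSet_Ioo]
    filter_upwards with t ht
    have htIoc : t ∈ Set.Ioc ξ t₁ := Set.Ioo_subset_Ioc_self ht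
    rw [Real.norm_eq_abs, abs_of_pos (hFpos t (hsub htIoc))]
    exact hmono.monotoneOn htIoc ht₁mem ht.2.le
end

section
/- Let A ∈ ℝ and let a, b, c : (−∞, η) → ℝ be a solution of the SU(2) centrally flat ODE system a' = (a/2)(−a² + b² + c²), b' = (b/2)(a² − b² + c²), c' = (c/2)(a² + b² + 2e^{−A}ab − c²), with a, b, c everywhere positive and a ≥ b on (−∞, η). Then either there exists q > 0 such that a(t) → q, b(t) → q, and c(t) → 0 as t → −∞, or there exists q ≥ 0 such that a(t) → q, b(t) → 0, and c(t) → q as t → −∞. -/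
open Set Filter

lemma myMonoOn {f g : ℝ → ℝ} {t₀ : ℝ}
    (hder : ∀ t ∈ Set.Iic t₀, HasDerivAt f (g t) t)
    (hg : ∀ t ∈ Set.Iic t₀, 0 ≤ g t) : MonotoneOn f (Set.Iic t₀) := by
  apply monotoneOn_of_deriv_nonneg (convex_Iic t₀)
  · exact fun t ht => (hder t ht).continuousAt.continuousWithinAt
  · intro t ht
    rw [interior_Iic] at ht
    exact ((hder t (Set.mem_Iic.mpr ht.le)).differentiableAt).differentiableWithinAt
  · intro t ht
    rw [interior_Iic] at ht
    rw [(hder t (Set.mem_Iic.mpr ht.le)).deriv]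
    exact hg t (Set.mem_Iic.mpr ht.le)

lemma myAntiOn {f g : ℝ → ℝ} {t₀ : ℝ}
    (hder : ∀ t ∈ Set.Iic t₀, HasDerivAt f (g t) t)
    (hg : ∀ t ∈ Set.Iic t₀, g t ≤ 0) : AntitoneOn f (Set.Iic t₀) := by
  apply antitoneOn_of_deriv_nonpos (convex_Iic t₀)
  · exact fun t ht => (hder t ht).continuousAt.continuousWithinAt
  · intro t ht
    rw [interior_Iic] at ht
    exact ((hder t (Set.mem_Iic.mpr ht.le)).differentiableAt).differentiableWithinAt
  · intro t ht
    rw [interior_Iic] at ht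
    rw [(hder t (Set.mem_Iic.mpr ht.le)).deriv]
    exact hg t (Set.mem_Iic.mpr ht.le)

lemma myTendstoMono {f : ℝ → ℝ} {t₀ m : ℝ}
    (hm : MonotoneOn f (Set.Iic t₀))
    (hlb : ∀ t ∈ Set.Iic t₀, m ≤ f t) :
    ∃ L, Filter.Tendsto f Filter.atBot (nhds L) ∧ (∀ t ∈ Set.Iic t₀, L ≤ f t) ∧ m ≤ L := by
  set g : ℝ → ℝ := fun t => f (min t t₀) with hg
  have hmin : ∀ t, min t t₀ ∈ Set.Iic t₀ := fun t => min_le_right t t₀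
  have hgm : Monotone g := fun s t hst => hm (hmin s) (hmin t) (min_le_min hst le_rfl)
  have hbdd : BddBelow (Set.range g) := ⟨m, by rintro x ⟨t, rfl⟩; exact hlb _ (hmin t)⟩
  refine ⟨⨅ t, g t, ?_, ?_, ?_⟩
  · have : Filter.Tendsto g Filter.atBot (nhds (⨅ t, g t)) := tendsto_atBot_ciInf hgm hbdd
    refine this.congr' ?_
    filter_upwards [Filter.eventually_le_atBot t₀] with t ht
    simp [hg, min_eq_left ht]
  · intro t ht
    have := ciInf_le hbdd t
    simpa [hg, min_eq_left (Set.mem_Iic.mp ht)] using this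
  · exact le_ciInf fun t => hlb _ (hmin t)

lemma myTendstoAnti {f : ℝ → ℝ} {t₀ M : ℝ}
    (hm : AntitoneOn f (Set.Iic t₀))
    (hub : ∀ t ∈ Set.Iic t₀, f t ≤ M) :
    ∃ L, Filter.Tendsto f Filter.atBot (nhds L) ∧ (∀ t ∈ Set.Iic t₀, f t ≤ L) ∧ L ≤ M := by
  set g : ℝ → ℝ := fun t => f (min t t₀) with hg
  have hmin : ∀ t, min t t₀ ∈ Set.Iic t₀ := fun t => min_le_right t t₀
  have hgm : Antitone g := fun s t hst => hm (hmin s) (hmin t) (min_le_min hst le_rfl)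
  have hbdd : BddAbove (Set.range g) := ⟨M, by rintro x ⟨t, rfl⟩; exact hub _ (hmin t)⟩
  refine ⟨⨆ t, g t, ?_, ?_, ?_⟩
  · have : Filter.Tendsto g Filter.atBot (nhds (⨆ t, g t)) := tendsto_atBot_ciSup hgm hbdd
    refine this.congr' ?_
    filter_upwards [Filter.eventually_le_atBot t₀] with t ht
    simp [hg, min_eq_left ht]
  · intro t ht
    have := le_ciSup hbdd t
    simpa [hg, min_eq_left (Set.mem_Iic.mp ht)] using this
  · exact ciSup_le fun t => hub _ (hmin t)

lemma myRiccati {f g : ℝ → ℝ} {t₂ : ℝ}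
    (hder : ∀ t ∈ Set.Iic t₂, HasDerivAt f (g t) t)
    (hpos : ∀ t ∈ Set.Iic t₂, 0 < f t)
    (hineq : ∀ t ∈ Set.Iic t₂, g t ≤ -(f t)^3/4) : False := by
  set ψ : ℝ → ℝ := fun t => ((f t)^2)⁻¹ - t/2 with hψ
  have hψder : ∀ t ∈ Set.Iic t₂,
      HasDerivAt ψ (-((2:ℕ) * f t ^ 1 * g t) / ((f t ^ 2)^2) - 1/2) t := by
    intro t ht
    have hf : (0:ℝ) < f t := hpos t ht
    have h2 : f t ^ 2 ≠ 0 := by positivity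
    exact (((hder t ht).pow 2).inv h2).sub ((hasDerivAt_id t).div_const 2)
  have hmono : MonotoneOn ψ (Set.Iic t₂) := by
    apply myMonoOn hψder
    intro t ht
    have hf := hpos t ht
    have h4 : (0:ℝ) < (f t ^ 2)^2 := by positivity
    have : (1:ℝ)/2 ≤ -((2:ℕ) * f t ^ 1 * g t) / ((f t ^ 2)^2) := by
      rw [le_div_iff₀ h4]
      have := hineq t ht
      push_cast
      nlinarith [pow_pos hf 4]
    linarith
  set t₁ : ℝ := t₂ - 2 * ((f t₂)^2)⁻¹ - 2 with ht₁
  have hq : 0 < ((f t₂)^2)⁻¹ := by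
    have : (0:ℝ) < f t₂ := hpos t₂ Set.self_mem_Iic
    positivity
  have h1le : t₁ ≤ t₂ := by
    rw [ht₁]; linarith
  have hkey := hmono (Set.mem_Iic.mpr h1le) Set.self_mem_Iic h1le
  have hp1 : 0 < ((f t₁)^2)⁻¹ := by
    have : (0:ℝ) < f t₁ := hpos t₁ (Set.mem_Iic.mpr h1le)
    positivity
  simp only [hψ] at hkey
  rw [ht₁] at hkey
  linarith

lemma myForwardInv {g g' : ℝ → ℝ} {t₁ t₂ : ℝ} (h12 : t₁ ≤ t₂)
    (hder : ∀ t ∈ Set.Icc t₁ t₂, HasDerivAt g (g' t) t)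
    (hzero : ∀ t ∈ Set.Icc t₁ t₂, g t = 0 → g' t < 0)
    (h1 : g t₁ < 0) : g t₂ < 0 := by
  by_contra h2
  push_neg at h2
  set S : Set ℝ := Set.Icc t₁ t₂ ∩ g ⁻¹' Set.Ici 0 with hS
  have hgc : ContinuousOn g (Set.Icc t₁ t₂) :=
    fun t ht => (hder t ht).continuousAt.continuousWithinAt
  have hSclosed : IsClosed S := hgc.preimage_isClosed_of_isClosed isClosed_Icc isClosed_Ici
  have hSne : S.Nonempty := ⟨t₂, ⟨⟨h12, le_rfl⟩, h2⟩⟩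
  have hSbdd : BddBelow S := ⟨t₁, fun t ht => ht.1.1⟩
  set s := sInf S with hs
  have hsS : s ∈ S := hSclosed.csInf_mem hSne hSbdd
  have hsIcc : s ∈ Set.Icc t₁ t₂ := hsS.1
  have hgs0 : 0 ≤ g s := hsS.2
  have h1s : t₁ < s := by
    rcases lt_or_eq_of_le hsIcc.1 with h | h
    · exact h
    · exact absurd (h ▸ hgs0) (not_le.mpr h1)
  have hlt : ∀ t, t₁ ≤ t → t < s → g t < 0 := by
    intro t ht hts
    by_contra hge
    push_neg at hge
    have : t ∈ S := ⟨⟨ht, hts.le.trans hsIcc.2⟩, hge⟩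
    exact absurd (csInf_le hSbdd this) (not_le.mpr hts)
  have hgs : g s = 0 := by
    rcases lt_or_eq_of_le hgs0 with h | h
    · exfalso
      have hev : ∀ᶠ t in nhds s, g t ∈ Set.Ioi 0 :=
        (hder s hsIcc).continuousAt (Ioi_mem_nhds h)
      have hev2 : ∀ᶠ t in nhdsWithin s (Set.Iio s), g t ∈ Set.Ioi 0 :=
        hev.filter_mono nhdsWithin_le_nhds
      have hmem : Set.Ioo t₁ s ∈ nhdsWithin s (Set.Iio s) := Ioo_mem_nhdsLT h1s
      obtain ⟨t, hgt, htIoo⟩ := (hev2.and (Filter.eventually_of_mem hmem (fun x hx => hx))).exists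
      exact absurd hgt (not_lt.mpr (hlt t htIoo.1.le htIoo.2).le)
    · exact h.symm
  have hds : g' s < 0 := hzero s hsIcc hgs
  have hwd : HasDerivWithinAt g (g' s) (Set.Iio s) s := (hder s hsIcc).hasDerivWithinAt
  rw [hasDerivWithinAt_iff_tendsto_slope] at hwd
  have hset : Set.Iio s \ {s} = Set.Iio s := by
    apply Set.diff_singleton_eq_self
    simp
  rw [hset] at hwd
  have : (0:ℝ) ≤ g' s := by
    refine ge_of_tendsto hwd ?_
    filter_upwards [Ioo_mem_nhdsLT h1s] with t ht
    have hgt : g t < 0 := hlt t ht.1.le ht.2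
    have hts : t - s < 0 := by linarith [ht.2]
    rw [slope_def_field]
    rw [hgs]
    have : (g t - 0) / (t - s) = g t / (t - s) := by ring_nf
    rw [this]
    exact le_of_lt (div_pos_of_neg_of_neg hgt hts)
  linarith

lemma myDerivLimitZero {f g : ℝ → ℝ} {t₀ L ℓ : ℝ}
    (hder : ∀ t ∈ Set.Iic t₀, HasDerivAt f (g t) t)
    (hL : Filter.Tendsto f Filter.atBot (nhds L))
    (hl : Filter.Tendsto g Filter.atBot (nhds ℓ)) : ℓ = 0 := by
  by_contra hne
  have hpos : 0 < |ℓ| / 2 := by positivity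
  -- eventually |g - ℓ| < |ℓ|/2
  have h1 : ∀ᶠ t in Filter.atBot, |g t - ℓ| < |ℓ| / 2 := by
    have := Metric.tendsto_nhds.mp hl (|ℓ|/2) hpos
    simpa [Real.dist_eq] using this
  have h2 : Filter.Tendsto (fun t => f t - f (t-1)) Filter.atBot (nhds 0) := by
    have : Filter.Tendsto (fun t : ℝ => t - 1) Filter.atBot Filter.atBot :=
      Filter.tendsto_atBot_add_const_right _ _ Filter.tendsto_id
    have := hL.sub (hL.comp this)
    simpa using this
  have h3 : ∀ᶠ t in Filter.atBot, |f t - f (t-1)| < |ℓ| / 4 := by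
    have := Metric.tendsto_nhds.mp h2 (|ℓ|/4) (by positivity)
    simpa [Real.dist_eq] using this
  obtain ⟨T1, hT1⟩ := Filter.eventually_atBot.mp h1
  obtain ⟨T3, hT3⟩ := Filter.eventually_atBot.mp h3
  set t := min (min T1 T3) t₀ with htdef
  have htt0 : t ≤ t₀ := min_le_right _ _
  have hcont : ContinuousOn f (Set.Icc (t-1) t) := fun s hs =>
    (hder s (Set.mem_Iic.mpr (hs.2.trans htt0))).continuousAt.continuousWithinAt
  have hderiv : ∀ s ∈ Set.Ioo (t-1) t, HasDerivAt f (g s) s := fun s hs =>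
    hder s (Set.mem_Iic.mpr (hs.2.le.trans htt0))
  obtain ⟨ξ, hξ, hξeq⟩ := exists_hasDerivAt_eq_slope f g (by linarith : t - 1 < t) hcont hderiv
  have hξle : ξ ≤ T1 := le_trans hξ.2.le (le_trans (min_le_left _ _) (min_le_left _ _))
  have hgξ := hT1 ξ hξle
  have htT3 : t ≤ T3 := le_trans (min_le_left _ _) (min_le_right _ _)
  have hft := hT3 t htT3
  have : g ξ = f t - f (t - 1) := by
    rw [hξeq]; field_simp; ring
  rw [this] at hgξ
  have : |ℓ| ≤ |f t - f (t-1) - ℓ| + |f t - f (t-1)| := by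
    have := abs_sub_abs_le_abs_sub (f t - f (t-1) - ℓ) (f t - f (t-1))
    have h := abs_sub (f t - f (t-1) - ℓ) (f t - f (t-1))
    calc |ℓ| = |(f t - f (t-1) - ℓ) - (f t - f (t-1))| := by
          rw [show (f t - f (t-1) - ℓ) - (f t - f (t-1)) = -ℓ by ring, abs_neg]
      _ ≤ |f t - f (t-1) - ℓ| + |f t - f (t-1)| := abs_sub _ _
  linarith [abs_nonneg ℓ]

lemma myClassify {E α β γ : ℝ} (hE : 0 < E) (hβα : β ≤ α) (hβ : 0 ≤ β) (hγ : 0 ≤ γ)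
    (h1 : α * (-α^2 + β^2 + γ^2) = 0)
    (h2 : β * (α^2 - β^2 + γ^2) = 0)
    (h3 : γ * (α^2 + β^2 + 2*E*α*β - γ^2) = 0) :
    (0 < β ∧ α = β ∧ γ = 0) ∨ (β = 0 ∧ α = γ) := by
  rcases eq_or_lt_of_le hβ with hb0 | hb0
  · right
    refine ⟨hb0.symm, ?_⟩
    rw [← hb0] at h1 h3
    have hα : 0 ≤ α := hb0 ▸ hβα
    rcases mul_eq_zero.mp h1 with h | h
    · subst h
      have h3' : γ * (0^2 + 0^2 + 2*E*0*0 - γ^2) = 0 := h3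
      have hγ3 : γ^3 = 0 := by nlinarith
      have : γ = 0 := by
        have := pow_eq_zero_iff (n := 3) (by norm_num) |>.mp hγ3
        exact this
      rw [this]
    · apply le_antisymm <;> nlinarith
  · left
    have hα : 0 < α := lt_of_lt_of_le hb0 hβα
    have e2 : α^2 - β^2 + γ^2 = 0 := by
      rcases mul_eq_zero.mp h2 with h | h
      · exact absurd h (ne_of_gt hb0)
      · exact h
    have hγ0 : γ = 0 := by nlinarith
    have : α = β := by nlinarith
    exact ⟨hb0, this, hγ0⟩

lemma myLimitsClassify (A η α β γ : ℝ) (a b c : ℝ → ℝ)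
    (hapos : ∀ t ∈ Set.Iio η, 0 < a t)
    (hbpos : ∀ t ∈ Set.Iio η, 0 < b t)
    (hcpos : ∀ t ∈ Set.Iio η, 0 < c t)
    (hab : ∀ t ∈ Set.Iio η, b t ≤ a t)
    (ha : ∀ t ∈ Set.Iio η,
      HasDerivAt a (a t / 2 * (-(a t) ^ 2 + (b t) ^ 2 + (c t) ^ 2)) t)
    (hb : ∀ t ∈ Set.Iio η,
      HasDerivAt b (b t / 2 * ((a t) ^ 2 - (b t) ^ 2 + (c t) ^ 2)) t)
    (hc : ∀ t ∈ Set.Iio η, HasDerivAt c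
      (c t / 2 * ((a t) ^ 2 + (b t) ^ 2 + 2 * Real.exp (-A) * a t * b t - (c t) ^ 2)) t)
    (hta : Filter.Tendsto a Filter.atBot (nhds α))
    (htb : Filter.Tendsto b Filter.atBot (nhds β))
    (htc : Filter.Tendsto c Filter.atBot (nhds γ)) :
    (∃ q : ℝ, 0 < q ∧
      Filter.Tendsto a Filter.atBot (nhds q) ∧
      Filter.Tendsto b Filter.atBot (nhds q) ∧
      Filter.Tendsto c Filter.atBot (nhds 0)) ∨
    (∃ q : ℝ, 0 ≤ q ∧
      Filter.Tendsto a Filter.atBot (nhds q) ∧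
      Filter.Tendsto b Filter.atBot (nhds 0) ∧
      Filter.Tendsto c Filter.atBot (nhds q)) := by
  set E := Real.exp (-A) with hEdef
  have hE : 0 < E := Real.exp_pos _
  have hev : ∀ᶠ t in Filter.atBot, t < η := Filter.eventually_lt_atBot η
  have hβα : β ≤ α :=
    le_of_tendsto_of_tendsto htb hta (hev.mono fun t ht => hab t ht)
  have hβ : 0 ≤ β := ge_of_tendsto htb (hev.mono fun t ht => (hbpos t ht).le)
  have hγ : 0 ≤ γ := ge_of_tendsto htc (hev.mono fun t ht => (hcpos t ht).le)
  have ht0 : ∀ t ∈ Set.Iic (η - 1), t ∈ Set.Iio η := fun t ht => Set.mem_Iio.mpr (lt_of_le_of_lt (Set.mem_Iic.mp ht) (by linarith))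
  have e1 : α / 2 * (-α^2 + β^2 + γ^2) = 0 := by
    apply myDerivLimitZero (fun t ht => ha t (ht0 t ht)) hta
    exact (hta.div_const 2).mul (((hta.pow 2).neg.add (htb.pow 2)).add (htc.pow 2))
  have e2 : β / 2 * (α^2 - β^2 + γ^2) = 0 := by
    apply myDerivLimitZero (fun t ht => hb t (ht0 t ht)) htb
    exact (htb.div_const 2).mul (((hta.pow 2).sub (htb.pow 2)).add (htc.pow 2))
  have e3 : γ / 2 * (α^2 + β^2 + 2*E*α*β - γ^2) = 0 := by
    apply myDerivLimitZero (fun t ht => hc t (ht0 t ht)) htc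
    exact (htc.div_const 2).mul
      ((((hta.pow 2).add (htb.pow 2)).add
        (((tendsto_const_nhds.mul hta).mul htb))).sub (htc.pow 2))
  have h1 : α * (-α^2 + β^2 + γ^2) = 0 := by linear_combination 2 * e1
  have h2 : β * (α^2 - β^2 + γ^2) = 0 := by linear_combination 2 * e2
  have h3 : γ * (α^2 + β^2 + 2*E*α*β - γ^2) = 0 := by linear_combination 2 * e3
  rcases myClassify hE hβα hβ hγ h1 h2 h3 with ⟨hbp, hαβ, hγ0⟩ | ⟨hb0, hαγ⟩
  · exact Or.inl ⟨β, hbp, hαβ ▸ hta, htb, hγ0 ▸ htc⟩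
  · exact Or.inr ⟨α, hb0 ▸ hβα, hta, hb0 ▸ htb, hαγ ▸ htc⟩

set_option maxHeartbeats 2000000 in
/-- A positive solution with `a ≥ b` of the SU(2) centrally flat ODE
system on `(−∞, η)` converges, as `t → −∞`, either to an equilibrium `(q, q, 0)` with
`q > 0`, or to an equilibrium `(q, 0, q)` with `q ≥ 0`. -/
theorem su2_system_limit_at_minus_infinity
    (A η : ℝ) (a b c : ℝ → ℝ)
    (ha : ∀ t ∈ Set.Iio η,
      HasDerivAt a (a t / 2 * (-(a t) ^ 2 + (b t) ^ 2 + (c t) ^ 2)) t)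
    (hb : ∀ t ∈ Set.Iio η,
      HasDerivAt b (b t / 2 * ((a t) ^ 2 - (b t) ^ 2 + (c t) ^ 2)) t)
    (hc : ∀ t ∈ Set.Iio η, HasDerivAt c
      (c t / 2 * ((a t) ^ 2 + (b t) ^ 2 + 2 * Real.exp (-A) * a t * b t - (c t) ^ 2)) t)
    (hapos : ∀ t ∈ Set.Iio η, 0 < a t)
    (hbpos : ∀ t ∈ Set.Iio η, 0 < b t)
    (hcpos : ∀ t ∈ Set.Iio η, 0 < c t)
    (hab : ∀ t ∈ Set.Iio η, b t ≤ a t) :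
    (∃ q : ℝ, 0 < q ∧
      Filter.Tendsto a Filter.atBot (nhds q) ∧
      Filter.Tendsto b Filter.atBot (nhds q) ∧
      Filter.Tendsto c Filter.atBot (nhds 0)) ∨
    (∃ q : ℝ, 0 ≤ q ∧
      Filter.Tendsto a Filter.atBot (nhds q) ∧
      Filter.Tendsto b Filter.atBot (nhds 0) ∧
      Filter.Tendsto c Filter.atBot (nhds q)) := by
  have hE : 0 < Real.exp (-A) := Real.exp_pos _
  set E := Real.exp (-A) with hEdef
  -- derivative of squares and related quantities
  have hD' : ∀ t ∈ Set.Iio η, HasDerivAt (fun s => a s^2 - b s^2 - c s^2)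
      (-((a t^2 - b t^2 + c t^2) * (a t^2 + b t^2 - c t^2)) - 2*E*(a t*b t*c t^2)) t := by
    intro t ht
    have h := (((ha t ht).fun_pow 2).fun_sub ((hb t ht).fun_pow 2)).fun_sub ((hc t ht).fun_pow 2)
    refine h.congr_deriv ?_
    push_cast
    ring
  have hF' : ∀ t ∈ Set.Iio η,
      HasDerivAt (fun s => c s^2 - a s^2 - b s^2 - 2*E*(a s * b s))
      ((a t^2 - b t^2 - c t^2) * (a t^2 - b t^2 + c t^2)) t := by
    intro t ht
    have h := ((((hc t ht).fun_pow 2).fun_sub ((ha t ht).fun_pow 2)).fun_sub ((hb t ht).fun_pow 2)).fun_sub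
      (((ha t ht).fun_mul (hb t ht)).const_mul (2*E))
    refine h.congr_deriv ?_
    push_cast
    ring
  -- b is nondecreasing everywhere
  have hbmonoAux : ∀ t₀, t₀ < η → MonotoneOn b (Set.Iic t₀) := by
    intro t₀ ht₀
    have hsub : ∀ t ∈ Set.Iic t₀, t ∈ Set.Iio η :=
      fun t ht => Set.mem_Iio.mpr (lt_of_le_of_lt (Set.mem_Iic.mp ht) ht₀)
    apply myMonoOn (fun t ht => hb t (hsub t ht))
    intro t ht
    have h1 := hbpos t (hsub t ht)
    have h2 := hab t (hsub t ht)
    have h3 := hapos t (hsub t ht)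
    have h4 : (0:ℝ) ≤ a t ^2 - b t^2 + c t^2 := by nlinarith
    exact mul_nonneg (by positivity) h4
  by_cases hcase : ∃ t₁, t₁ < η ∧ 0 ≤ a t₁^2 - b t₁^2 - c t₁^2
  · -- CASE A : D ≥ 0 somewhere, hence on a whole left ray
    obtain ⟨t₁, ht₁η, hDt₁⟩ := hcase
    have hsub : ∀ t ∈ Set.Iic t₁, t ∈ Set.Iio η :=
      fun t ht => Set.mem_Iio.mpr (lt_of_le_of_lt (Set.mem_Iic.mp ht) ht₁η)
    -- D ≥ 0 on (-∞, t₁]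
    have hDpos : ∀ t ∈ Set.Iic t₁, 0 ≤ a t^2 - b t^2 - c t^2 := by
      intro t ht
      by_contra hneg
      push_neg at hneg
      rcases eq_or_lt_of_le (Set.mem_Iic.mp ht) with h | h
      · rw [h] at hneg; linarith
      · have hIcc : ∀ s ∈ Set.Icc t t₁, s ∈ Set.Iio η :=
          fun s hs => Set.mem_Iio.mpr (lt_of_le_of_lt hs.2 ht₁η)
        have := myForwardInv h.le
          (fun s hs => hD' s (hIcc s hs))
          (fun s hs h0 => by
            have hbp := hbpos s (hIcc s hs)
            have hcp := hcpos s (hIcc s hs)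
            have hap := hapos s (hIcc s hs)
            have e1 : a s^2 - b s^2 + c s^2 = 2*c s^2 := by linarith
            have e2 : a s^2 + b s^2 - c s^2 = 2*b s^2 := by linarith
            rw [e1, e2]
            have h5 : (0:ℝ) < 2*c s^2 * (2*b s^2) := by positivity
            have h6 : (0:ℝ) < 2*E*(a s*b s*c s^2) := by positivity
            linarith) hneg
        linarith
    -- F is nondecreasing on (-∞, t₁]
    have hFmono : MonotoneOn (fun s => c s^2 - a s^2 - b s^2 - 2*E*(a s * b s)) (Set.Iic t₁) := by
      apply myMonoOn (fun t ht => hF' t (hsub t ht))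
      intro t ht
      have h1 := hDpos t ht
      have h2 := hab t (hsub t ht)
      have h3 := hbpos t (hsub t ht)
      have h4 : (0:ℝ) ≤ a t^2 - b t^2 + c t^2 := by nlinarith
      exact mul_nonneg h1 h4
    have hFneg : c t₁^2 - a t₁^2 - b t₁^2 - 2*E*(a t₁ * b t₁) < 0 := by
      have h1 := hbpos t₁ (hsub t₁ Set.self_mem_Iic)
      have h2 := hapos t₁ (hsub t₁ Set.self_mem_Iic)
      nlinarith [mul_pos h2 h1, mul_pos hE (mul_pos h2 h1)]
    -- c is nondecreasing on (-∞, t₁]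
    have hcmono : MonotoneOn c (Set.Iic t₁) := by
      apply myMonoOn (fun t ht => hc t (hsub t ht))
      intro t ht
      have hF : c t^2 - a t^2 - b t^2 - 2*E*(a t * b t) ≤
          c t₁^2 - a t₁^2 - b t₁^2 - 2*E*(a t₁ * b t₁) :=
        hFmono ht Set.self_mem_Iic (Set.mem_Iic.mp ht)
      have h1 := (hcpos t (hsub t ht)).le
      have h2 : (0:ℝ) ≤ a t^2 + b t^2 + 2*E*a t*b t - c t^2 := by nlinarith [hF, hFneg]
      exact mul_nonneg (by positivity) h2
    -- a is nonincreasing on (-∞, t₁]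
    have haanti : AntitoneOn a (Set.Iic t₁) := by
      apply myAntiOn (fun t ht => ha t (hsub t ht))
      intro t ht
      have h1 := hDpos t ht
      have h2 := (hapos t (hsub t ht)).le
      have h3 : -(a t)^2 + b t^2 + c t^2 ≤ 0 := by nlinarith
      have h4 : (0:ℝ) ≤ a t / 2 := by positivity
      exact mul_nonpos_of_nonneg_of_nonpos h4 h3
    -- a is bounded above on (-∞, t₁]
    obtain ⟨K, hKdef⟩ : ∃ x : ℝ, x = b t₁^2 + c t₁^2 := ⟨_, rfl⟩
    have hKpos : 0 < K := by
      have h1 := hbpos t₁ (hsub t₁ Set.self_mem_Iic)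
      have h2 := hcpos t₁ (hsub t₁ Set.self_mem_Iic)
      rw [hKdef]; positivity
    have habd : ∀ t ∈ Set.Iic t₁, a t^2 ≤ 2*K := by
      by_contra hcon
      push_neg at hcon
      obtain ⟨t₂, ht₂, hbig⟩ := hcon
      have hsub2 : ∀ t ∈ Set.Iic t₂, t ∈ Set.Iic t₁ :=
        fun t ht => Set.mem_Iic.mpr (le_trans (Set.mem_Iic.mp ht) (Set.mem_Iic.mp ht₂))
      apply myRiccati (f := a) (t₂ := t₂)
        (fun t ht => ha t (hsub t (hsub2 t ht)))
        (fun t ht => hapos t (hsub t (hsub2 t ht)))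
      intro t ht
      have hge : a t₂ ≤ a t := haanti (hsub2 t ht) ht₂ (Set.mem_Iic.mp ht)
      have hap := hapos t (hsub t (hsub2 t ht))
      have hap2 := hapos t₂ (hsub t₂ ht₂)
      have hsq : 2*K < a t^2 := by nlinarith
      have hbb : b t ≤ b t₁ := hbmonoAux t₁ ht₁η (hsub2 t ht) Set.self_mem_Iic
        (Set.mem_Iic.mp (hsub2 t ht))
      have hcc : c t ≤ c t₁ := hcmono (hsub2 t ht) Set.self_mem_Iic
        (Set.mem_Iic.mp (hsub2 t ht))
      have hbp := hbpos t (hsub t (hsub2 t ht))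
      have hcp := hcpos t (hsub t (hsub2 t ht))
      have hbc : b t^2 + c t^2 ≤ K := by rw [hKdef]; nlinarith
      have h5 : -(a t)^2 + b t^2 + c t^2 ≤ -(a t^2)/2 := by nlinarith
      calc a t / 2 * (-(a t)^2 + b t^2 + c t^2) ≤ a t / 2 * (-(a t^2)/2) :=
            mul_le_mul_of_nonneg_left h5 (by positivity)
        _ = -(a t)^3/4 := by ring
    -- limits
    obtain ⟨β, htβ, _, hβ0⟩ := myTendstoMono (hbmonoAux t₁ ht₁η)
      (fun t ht => (hbpos t (hsub t ht)).le)
    obtain ⟨γ, htγ, _, hγ0⟩ := myTendstoMono hcmono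
      (fun t ht => (hcpos t (hsub t ht)).le)
    have haub : ∀ t ∈ Set.Iic t₁, a t ≤ 2*K + 1 := by
      intro t ht
      have := habd t ht
      nlinarith [sq_nonneg (a t - 1)]
    obtain ⟨α, htα, _, _⟩ := myTendstoAnti haanti haub
    exact myLimitsClassify A η α β γ a b c hapos hbpos hcpos hab ha hb hc htα htβ htγ
  · -- CASE B : D < 0 everywhere
    push_neg at hcase
    obtain ⟨t₀, ht₀def⟩ : ∃ x : ℝ, x = η - 1 := ⟨_, rfl⟩
    have ht₀η : t₀ < η := by rw [ht₀def]; linarith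
    have hsub : ∀ t ∈ Set.Iic t₀, t ∈ Set.Iio η :=
      fun t ht => Set.mem_Iio.mpr (lt_of_le_of_lt (Set.mem_Iic.mp ht) ht₀η)
    have hDneg : ∀ t ∈ Set.Iio η, a t^2 - b t^2 - c t^2 < 0 := fun t ht => hcase t ht
    -- a is nondecreasing
    have hamono : MonotoneOn a (Set.Iic t₀) := by
      apply myMonoOn (fun t ht => ha t (hsub t ht))
      intro t ht
      have h1 := hDneg t (hsub t ht)
      have h2 := (hapos t (hsub t ht)).le
      have h3 : (0:ℝ) ≤ -(a t)^2 + b t^2 + c t^2 := by nlinarith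
      exact mul_nonneg (by positivity) h3
    obtain ⟨Ma, hMadef⟩ : ∃ x : ℝ, x = a t₀ := ⟨_, rfl⟩
    have hMapos : 0 < Ma := by rw [hMadef]; exact hapos t₀ (hsub t₀ Set.self_mem_Iic)
    have haMa : ∀ t ∈ Set.Iic t₀, a t ≤ Ma := fun t ht => by
      rw [hMadef]; exact hamono ht Set.self_mem_Iic (Set.mem_Iic.mp ht)
    obtain ⟨K, hKdef⟩ : ∃ x : ℝ, x = Ma^2 + Ma^2 + 2*E*Ma*Ma + 1 := ⟨_, rfl⟩
    have hKpos : 0 < K := by rw [hKdef]; positivity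
    have hbound : ∀ t ∈ Set.Iic t₀, a t^2 + b t^2 + 2*E*(a t * b t) ≤ K - 1 := by
      intro t ht
      have h1 := haMa t ht
      have h2 := hab t (hsub t ht)
      have h3 := (hbpos t (hsub t ht)).le
      have h4 := (hapos t (hsub t ht)).le
      have hb2 : b t ≤ Ma := le_trans h2 h1
      have e1 : a t^2 ≤ Ma^2 := by nlinarith
      have e2 : b t^2 ≤ Ma^2 := by nlinarith
      have hprod : a t * b t ≤ Ma * Ma := mul_le_mul h1 hb2 h3 hMapos.le
      have e3 : 2*E*(a t * b t) ≤ 2*E*Ma*Ma := by nlinarith [mul_le_mul_of_nonneg_left hprod hE.le]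
      rw [hKdef]; linarith
    -- c is bounded : c² ≤ 2K on (-∞, t₀]
    have hcbd : ∀ t ∈ Set.Iic t₀, c t^2 ≤ 2*K := by
      by_contra hcon
      push_neg at hcon
      obtain ⟨t₂, ht₂, hbig⟩ := hcon
      have hsub2 : ∀ t ∈ Set.Iic t₂, t ∈ Set.Iic t₀ :=
        fun t ht => Set.mem_Iic.mpr (le_trans (Set.mem_Iic.mp ht) (Set.mem_Iic.mp ht₂))
      have hclow : ∀ t ∈ Set.Iic t₂, 2*K ≤ c t^2 := by
        intro t ht
        by_contra hlt
        push_neg at hlt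
        rcases eq_or_lt_of_le (Set.mem_Iic.mp ht) with h | h
        · rw [h] at hlt; linarith
        · have hIcc : ∀ s ∈ Set.Icc t t₂, s ∈ Set.Iic t₀ :=
            fun s hs => Set.mem_Iic.mpr (le_trans hs.2 (Set.mem_Iic.mp ht₂))
          have hginv := myForwardInv (g := fun s => c s^2 - 2*K)
            (g' := fun s => c s^2 * (a s^2 + b s^2 + 2*E*a s*b s - c s^2)) h.le
            (fun s hs => by
              have hd := ((hc s (hsub s (hIcc s hs))).fun_pow 2).sub_const (2*K)
              refine hd.congr_deriv ?_
              push_cast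
              ring)
            (fun s hs h0 => by
              have hc2 : c s^2 - 2*K = 0 := h0
              have hbd := hbound s (hIcc s hs)
              show c s^2 * (a s^2 + b s^2 + 2*E*a s*b s - c s^2) < 0
              nlinarith [hKpos])
            (show c t^2 - 2*K < 0 by linarith)
          have : c t₂^2 - 2*K < 0 := hginv
          linarith
      apply myRiccati (f := c) (t₂ := t₂)
        (fun t ht => hc t (hsub t (hsub2 t ht)))
        (fun t ht => hcpos t (hsub t (hsub2 t ht)))
      intro t ht
      have h1 := hclow t ht
      have h2 := hbound t (hsub2 t ht)
      have hcp := hcpos t (hsub t (hsub2 t ht))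
      have h5 : a t^2 + b t^2 + 2*E*a t*b t - c t^2 ≤ -(c t^2)/2 := by nlinarith
      calc c t / 2 * (a t^2 + b t^2 + 2*E*a t*b t - c t^2) ≤ c t / 2 * (-(c t^2)/2) :=
            mul_le_mul_of_nonneg_left h5 (by positivity)
        _ = -(c t)^3/4 := by ring
    -- F is nonincreasing on (-∞, t₀]
    have hFanti : AntitoneOn (fun s => c s^2 - a s^2 - b s^2 - 2*E*(a s * b s)) (Set.Iic t₀) := by
      apply myAntiOn (fun t ht => hF' t (hsub t ht))
      intro t ht
      have h1 := (hDneg t (hsub t ht)).le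
      have h2 := hab t (hsub t ht)
      have h3 := hbpos t (hsub t ht)
      have h4 : (0:ℝ) ≤ a t^2 - b t^2 + c t^2 := by nlinarith [hcpos t (hsub t ht)]
      exact mul_nonpos_of_nonpos_of_nonneg h1 h4
    have hFub : ∀ t ∈ Set.Iic t₀, c t^2 - a t^2 - b t^2 - 2*E*(a t * b t) ≤ 2*K := by
      intro t ht
      have h1 := hcbd t ht
      have h2 := (hapos t (hsub t ht)).le
      have h3 := (hbpos t (hsub t ht)).le
      nlinarith [mul_nonneg h2 h3, mul_nonneg hE.le (mul_nonneg h2 h3)]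
    obtain ⟨Φ, htΦ, _, _⟩ := myTendstoAnti hFanti hFub
    obtain ⟨α, htα, _, hα0⟩ := myTendstoMono hamono
      (fun t ht => (hapos t (hsub t ht)).le)
    obtain ⟨β, htβ, _, hβ0⟩ := myTendstoMono (hbmonoAux t₀ ht₀η)
      (fun t ht => (hbpos t (hsub t ht)).le)
    -- c² converges
    obtain ⟨γsq, hγsqdef⟩ : ∃ x : ℝ, x = Φ + α^2 + β^2 + 2*E*(α*β) := ⟨_, rfl⟩
    have htc2 : Filter.Tendsto (fun t => c t^2) Filter.atBot (nhds γsq) := by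
      have h := ((htΦ.add (htα.pow 2)).add (htβ.pow 2)).add
        ((htα.mul htβ).const_mul (2*E))
      have h2 : Filter.Tendsto
          (fun t => c t^2 - a t^2 - b t^2 - 2*E*(a t * b t) + a t^2 + b t^2
            + 2*E*(a t * b t)) Filter.atBot (nhds γsq) := by
        rw [hγsqdef]
        exact h
      refine h2.congr fun t => ?_
      ring
    have hγsq : 0 ≤ γsq :=
      ge_of_tendsto htc2 (Filter.Eventually.of_forall fun t => sq_nonneg _)
    have htγ : Filter.Tendsto c Filter.atBot (nhds (Real.sqrt γsq)) := by
      have h := (Real.continuous_sqrt.tendsto _).comp htc2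
      refine h.congr' ?_
      filter_upwards [Filter.eventually_lt_atBot η] with t ht
      exact Real.sqrt_sq (hcpos t ht).le
    exact myLimitsClassify A η α β (Real.sqrt γsq) a b c hapos hbpos hcpos hab ha hb hc htα htβ htγ
end

section
/- Let A ∈ ℝ and let a, b, c : (−∞, η) → ℝ be a solution of the SU(2) centrally flat ODE system a' = (a/2)(−a² + b² + c²), b' = (b/2)(a² − b² + c²), c' = (c/2)(a² + b² + 2e^{−A}ab − c²), with a, b, c everywhere positive. If there exists q > 0 such that a(t) → q and b(t) → q as t → −∞, then a(t) = b(t) for all t ∈ (−∞, η). -/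
/-- A positive solution of the SU(2) centrally flat ODE system on
`(−∞, η)` with `a(t) → q` and `b(t) → q` as `t → −∞` for some `q > 0` satisfies
`a ≡ b` on `(−∞, η)`. -/
theorem su2_system_biaxial_when_converging_to_qq0
    (A η : ℝ) (a b c : ℝ → ℝ)
    (ha : ∀ t ∈ Set.Iio η,
      HasDerivAt a (a t / 2 * (-(a t) ^ 2 + (b t) ^ 2 + (c t) ^ 2)) t)
    (hb : ∀ t ∈ Set.Iio η,
      HasDerivAt b (b t / 2 * ((a t) ^ 2 - (b t) ^ 2 + (c t) ^ 2)) t)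
    (hc : ∀ t ∈ Set.Iio η, HasDerivAt c
      (c t / 2 * ((a t) ^ 2 + (b t) ^ 2 + 2 * Real.exp (-A) * a t * b t - (c t) ^ 2)) t)
    (hapos : ∀ t ∈ Set.Iio η, 0 < a t)
    (hbpos : ∀ t ∈ Set.Iio η, 0 < b t)
    (hcpos : ∀ t ∈ Set.Iio η, 0 < c t)
    (q : ℝ) (hq : 0 < q)
    (hlima : Filter.Tendsto a Filter.atBot (nhds q))
    (hlimb : Filter.Tendsto b Filter.atBot (nhds q)) :
    ∀ t ∈ Set.Iio η, a t = b t := by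
  set s : ℝ → ℝ := fun t => ((a t) ^ 2)⁻¹ - ((b t) ^ 2)⁻¹ with hs_def
  -- derivative of s
  have hs : ∀ t ∈ Set.Iio η,
      HasDerivAt s (-((a t) ^ 2 + (b t) ^ 2 + (c t) ^ 2) * s t) t := by
    intro t ht
    have ha0 : a t ≠ 0 := (hapos t ht).ne'
    have hb0 : b t ≠ 0 := (hbpos t ht).ne'
    have h1 : HasDerivAt (fun t => ((a t) ^ 2)⁻¹)
        (-(2 * a t ^ 1 * (a t / 2 * (-(a t) ^ 2 + (b t) ^ 2 + (c t) ^ 2))) / ((a t ^ 2) ^ 2)) t :=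
      ((ha t ht).pow 2).inv (pow_ne_zero 2 ha0)
    have h2 : HasDerivAt (fun t => ((b t) ^ 2)⁻¹)
        (-(2 * b t ^ 1 * (b t / 2 * ((a t) ^ 2 - (b t) ^ 2 + (c t) ^ 2))) / ((b t ^ 2) ^ 2)) t :=
      ((hb t ht).pow 2).inv (pow_ne_zero 2 hb0)
    have := h1.sub h2
    convert this using 1
    · rfl
    · rfl
    · rfl
    simp only [hs_def, pow_one]
    field_simp
    ring
  set g : ℝ → ℝ := fun t => s t ^ 2 with hg_def
  have hg : ∀ t ∈ Set.Iio η,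
      HasDerivAt g (2 * s t ^ 1 * (-((a t) ^ 2 + (b t) ^ 2 + (c t) ^ 2) * s t)) t :=
    fun t ht => (hs t ht).pow 2
  have hgderiv_nonpos : ∀ t ∈ Set.Iio η,
      2 * s t ^ 1 * (-((a t) ^ 2 + (b t) ^ 2 + (c t) ^ 2) * s t) ≤ 0 := by
    intro t ht
    have : 2 * s t ^ 1 * (-((a t) ^ 2 + (b t) ^ 2 + (c t) ^ 2) * s t)
        = -(2 * ((a t) ^ 2 + (b t) ^ 2 + (c t) ^ 2) * s t ^ 2) := by ring
    rw [this]
    have hK : (0:ℝ) ≤ (a t) ^ 2 + (b t) ^ 2 + (c t) ^ 2 := by positivity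
    have : (0:ℝ) ≤ 2 * ((a t) ^ 2 + (b t) ^ 2 + (c t) ^ 2) * s t ^ 2 := by positivity
    linarith
  -- g is antitone on Iio η
  have hanti : AntitoneOn g (Set.Iio η) := by
    have hint : interior (Set.Iio η) = Set.Iio η := interior_Iio
    apply antitoneOn_of_deriv_nonpos (convex_Iio η)
    · exact fun t ht => ((hg t ht).differentiableAt).continuousAt.continuousWithinAt
    · rw [hint]; exact fun t ht => (hg t ht).differentiableAt.differentiableWithinAt
    · rw [hint]; intro t ht
      rw [(hg t ht).deriv]
      exact hgderiv_nonpos t ht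
  -- limits
  have hq2 : q ^ 2 ≠ 0 := pow_ne_zero 2 hq.ne'
  have hslim : Filter.Tendsto s Filter.atBot (nhds 0) := by
    have h1 : Filter.Tendsto (fun t => ((a t) ^ 2)⁻¹) Filter.atBot (nhds (q ^ 2)⁻¹) :=
      (hlima.pow 2).inv₀ hq2
    have h2 : Filter.Tendsto (fun t => ((b t) ^ 2)⁻¹) Filter.atBot (nhds (q ^ 2)⁻¹) :=
      (hlimb.pow 2).inv₀ hq2
    have := h1.sub h2
    simpa using this
  have hglim : Filter.Tendsto g Filter.atBot (nhds 0) := by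
    have := hslim.pow 2
    simpa using this
  intro t ht
  have hev : ∀ᶠ t' in Filter.atBot, g t ≤ g t' := by
    filter_upwards [Filter.eventually_le_atBot t] with t' ht'
    exact hanti (lt_of_le_of_lt ht' ht) ht ht'
  have hgle : g t ≤ 0 := ge_of_tendsto hglim hev
  have hge : 0 ≤ g t := sq_nonneg _
  have hs0 : s t = 0 := by
    have : g t = 0 := le_antisymm hgle hge
    exact pow_eq_zero_iff (n := 2) (by norm_num) |>.mp this
  have ha0 : a t ≠ 0 := (hapos t ht).ne'
  have hb0 : b t ≠ 0 := (hbpos t ht).ne'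
  have heq : (a t) ^ 2 = (b t) ^ 2 := by
    have h : ((a t) ^ 2)⁻¹ = ((b t) ^ 2)⁻¹ := by
      have := sub_eq_zero.mp hs0
      exact this
    exact inv_injective h
  nlinarith [hapos t ht, hbpos t ht]
end

section
/- Let γ > 0 and t₀ ∈ ℝ. There do not exist differentiable functions w₁, w₃ : [t₀, ∞) → ℝ with w₁(t₀) > 0 and w₃(t₀) > 0 satisfying w₁' = γ·w₁·w₃ and w₃' = w₁² on [t₀, ∞). Equivalently, any maximal solution of this system with positive initial data has finite right endpoint η < ∞ of its interval of existence. -/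
/-- Monotonicity from a one-sided derivative bound on `Ici a`. -/
lemma biaxial_mono_aux {a : ℝ} {f f' : ℝ → ℝ}
    (hf : ∀ t ∈ Set.Ici a, HasDerivWithinAt f (f' t) (Set.Ici a) t)
    (h0 : ∀ t ∈ Set.Ici a, 0 ≤ f' t) : MonotoneOn f (Set.Ici a) := by
  refine monotoneOn_of_hasDerivWithinAt_nonneg (convex_Ici a)
    (fun t ht => (hf t ht).continuousWithinAt)
    (fun t ht => ((hf t (interior_subset ht)).mono interior_subset))
    (fun t ht => h0 t (interior_subset ht))

/-- A function with vanishing derivative on `Ici a` is constant there. -/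
lemma biaxial_const_aux {a : ℝ} {f : ℝ → ℝ}
    (hf : ∀ t ∈ Set.Ici a, HasDerivWithinAt f 0 (Set.Ici a) t) :
    ∀ t ∈ Set.Ici a, f t = f a := by
  intro t ht
  have h := (convex_Ici a).norm_image_sub_le_of_norm_hasDerivWithin_le
    (C := 0) (f' := fun _ => (0 : ℝ)) (fun x hx => hf x hx)
    (fun x _ => by simp) (Set.self_mem_Ici) ht
  simp only [zero_mul, norm_le_zero_iff, sub_eq_zero] at h
  exact h

/-- For `γ > 0`, there is no solution of the system `w₁' = γ·w₁·w₃`,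
`w₃' = w₁²` on all of `[t₀, ∞)` with positive initial data `w₁(t₀) > 0`, `w₃(t₀) > 0`:
such solutions blow up in finite forward time. -/
theorem biaxial_system_finite_time_blowup
    (γ : ℝ) (hγ : 0 < γ) (t₀ : ℝ) :
    ¬ ∃ w₁ w₃ : ℝ → ℝ, 0 < w₁ t₀ ∧ 0 < w₃ t₀ ∧
      (∀ t ∈ Set.Ici t₀, HasDerivWithinAt w₁ (γ * w₁ t * w₃ t) (Set.Ici t₀) t) ∧
      (∀ t ∈ Set.Ici t₀, HasDerivWithinAt w₃ ((w₁ t) ^ 2) (Set.Ici t₀) t) := by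
  rintro ⟨w₁, w₃, hw₁0, hw₃0, h1, h3⟩
  set C : ℝ := w₁ t₀ ^ 2 - γ * w₃ t₀ ^ 2 with hC
  -- conserved quantity : w₁² - γ w₃² is constant
  have hconst : ∀ t ∈ Set.Ici t₀, w₁ t ^ 2 - γ * w₃ t ^ 2 = C := by
    apply biaxial_const_aux
    intro t ht
    have hd : HasDerivWithinAt (fun s => w₁ s ^ 2 - γ * w₃ s ^ 2)
        (2 * w₁ t ^ 1 * (γ * w₁ t * w₃ t) - γ * (2 * w₃ t ^ 1 * w₁ t ^ 2))
        (Set.Ici t₀) t := ((h1 t ht).pow 2).sub (((h3 t ht).pow 2).const_mul γ)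
    convert hd using 1
    ring
  -- w₃ is nondecreasing
  have hmono : MonotoneOn w₃ (Set.Ici t₀) :=
    biaxial_mono_aux h3 (fun t _ => sq_nonneg _)
  set d : ℝ := w₁ t₀ ^ 2 with hdd
  have hd0 : 0 < d := pow_pos hw₁0 2
  -- uniform lower bound on w₁²
  have key : ∀ t ∈ Set.Ici t₀, d ≤ w₁ t ^ 2 := by
    intro t ht
    have h₁ := hconst t ht
    have h₂ : w₃ t₀ ≤ w₃ t := hmono Set.self_mem_Ici ht ht
    have hsq : w₃ t₀ ^ 2 ≤ w₃ t ^ 2 := by nlinarith [hw₃0]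
    nlinarith [mul_nonneg hγ.le (sub_nonneg.mpr hsq)]
  -- linear growth of w₃
  have growth : ∀ t ∈ Set.Ici t₀, w₃ t₀ + d * (t - t₀) ≤ w₃ t := by
    have hφ : MonotoneOn (fun s => w₃ s - d * s) (Set.Ici t₀) := by
      apply biaxial_mono_aux (f' := fun s => w₁ s ^ 2 - d)
      · intro t ht
        have : HasDerivWithinAt (fun s => w₃ s - d * s) (w₁ t ^ 2 - d * 1)
            (Set.Ici t₀) t :=
          (h3 t ht).sub (((hasDerivAt_id t).const_mul d).hasDerivWithinAt)
        simpa using this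
      · intro t ht
        have := key t ht
        linarith
    intro t ht
    have := hφ Set.self_mem_Ici ht ht
    simp only at this
    linarith
  -- pick t₁ beyond which γ w₃² ≥ 2 |C|
  set K : ℝ := Real.sqrt (2 * |C| / γ) with hKdef
  have hK0 : 0 ≤ K := Real.sqrt_nonneg _
  have hK2 : K ^ 2 = 2 * |C| / γ := by
    rw [hKdef]; exact Real.sq_sqrt (by positivity)
  set t₁ : ℝ := t₀ + K / d with ht₁def
  have ht₁ : t₁ ∈ Set.Ici t₀ := by
    simp only [Set.mem_Ici, ht₁def]
    have : 0 ≤ K / d := div_nonneg hK0 hd0.le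
    linarith
  have hw₃t₁K : K < w₃ t₁ := by
    have := growth t₁ ht₁
    have h2 : d * (t₁ - t₀) = K := by
      rw [ht₁def]; field_simp; ring
    nlinarith [hw₃0]
  have hw₃t₁ : 0 < w₃ t₁ := lt_of_le_of_lt hK0 hw₃t₁K
  have hCbound : -C ≤ γ / 2 * w₃ t₁ ^ 2 := by
    have h1' : K ^ 2 ≤ w₃ t₁ ^ 2 := by nlinarith
    have h2' : γ * K ^ 2 = 2 * |C| := by
      rw [hK2]; field_simp
    have : -C ≤ |C| := neg_le_abs C
    nlinarith
  -- positivity and lower derivative bound on [t₁, ∞)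
  have hsub : Set.Ici t₁ ⊆ Set.Ici t₀ := Set.Ici_subset_Ici.mpr ht₁
  have hw₃pos : ∀ t ∈ Set.Ici t₁, 0 < w₃ t := fun t ht =>
    lt_of_lt_of_le hw₃t₁ (hmono ht₁ (hsub ht) ht)
  have hric : ∀ t ∈ Set.Ici t₁, γ / 2 * w₃ t ^ 2 ≤ w₁ t ^ 2 := by
    intro t ht
    have h₁ := hconst t (hsub ht)
    have h₂ : w₃ t₁ ≤ w₃ t := hmono ht₁ (hsub ht) ht
    have hsq : w₃ t₁ ^ 2 ≤ w₃ t ^ 2 := by nlinarith [hw₃t₁]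
    nlinarith [mul_nonneg hγ.le (sub_nonneg.mpr hsq)]
  -- Riccati comparison via u = -1/w₃
  have hψ : MonotoneOn (fun s => -(w₃ s)⁻¹ - γ / 2 * s) (Set.Ici t₁) := by
    apply biaxial_mono_aux (f' := fun s => w₁ s ^ 2 / w₃ s ^ 2 - γ / 2)
    · intro t ht
      have hne : w₃ t ≠ 0 := (hw₃pos t ht).ne'
      have hdw : HasDerivWithinAt w₃ (w₁ t ^ 2) (Set.Ici t₁) t :=
        (h3 t (hsub ht)).mono hsub
      have hu : HasDerivWithinAt (fun s => -(w₃ s)⁻¹)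
          (-(-(w₁ t ^ 2) / w₃ t ^ 2)) (Set.Ici t₁) t := (hdw.inv hne).neg
      have hlin : HasDerivWithinAt (fun s => γ / 2 * s) (γ / 2 * 1)
          (Set.Ici t₁) t := ((hasDerivAt_id t).const_mul (γ / 2)).hasDerivWithinAt
      have := hu.sub hlin
      refine HasDerivWithinAt.congr_deriv this ?_
      ring
    · intro t ht
      have hpos : 0 < w₃ t ^ 2 := pow_pos (hw₃pos t ht) 2
      have := hric t ht
      rw [sub_nonneg, le_div_iff₀ hpos]
      linarith
  -- evaluate at the explicit blow-up time
  set t₂ : ℝ := t₁ + 2 / (γ * w₃ t₁) + 1 with ht₂def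
  have ht₂ : t₂ ∈ Set.Ici t₁ := by
    simp only [Set.mem_Ici, ht₂def]
    have : 0 ≤ 2 / (γ * w₃ t₁) := by positivity
    linarith
  have hmon := hψ Set.self_mem_Ici ht₂ ht₂
  simp only at hmon
  have hstep : γ / 2 * (t₂ - t₁) = (w₃ t₁)⁻¹ + γ / 2 := by
    rw [ht₂def]
    field_simp
    ring
  have hb : 0 < (w₃ t₂)⁻¹ := inv_pos.mpr (hw₃pos t₂ ht₂)
  linarith
end

section
/- Let γ > 0 and define a, c : (−∞, 0) → ℝ by a(t) = (−γt)^{−1/2} and c(t) = (−t)^{−1/2}. Then a and c satisfy the biaxial SU(2) centrally flat system a' = (a/2)c² and c' = (c/2)(2γa² − c²) on (−∞, 0), and (a(t), c(t)) → (0, 0) as t → −∞. -/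
lemma aux_deriv (k : ℝ) (hk : 0 < k) (t : ℝ) (ht : t < 0) :
    HasDerivAt (fun t : ℝ => (-(k * t)) ^ (-(1 / 2) : ℝ))
      (k / 2 * (-(k * t)) ^ ((-(1 / 2) : ℝ) - 1)) t := by
  have hx : 0 < -(k * t) := by nlinarith
  have h1 : HasDerivAt (fun t : ℝ => -(k * t)) (-k) t := by
    simpa [Pi.neg_def] using ((hasDerivAt_id t).const_mul k).neg
  have := h1.rpow_const (p := (-(1 / 2) : ℝ)) (Or.inl (ne_of_gt hx))
  convert this using 1
  ring

lemma aux_tendsto (k : ℝ) (hk : 0 < k) :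
    Filter.Tendsto (fun t : ℝ => (-(k * t)) ^ (-(1 / 2) : ℝ))
      Filter.atBot (nhds 0) := by
  have h1 : Filter.Tendsto (fun t : ℝ => -(k * t)) Filter.atBot Filter.atTop := by
    have : (fun t : ℝ => -(k * t)) = fun t : ℝ => k * (-t) := by funext t; ring
    rw [this]
    exact (Filter.tendsto_neg_atBot_atTop).const_mul_atTop hk
  exact (tendsto_rpow_neg_atTop (y := (1/2)) (by norm_num)).comp h1

/-- For `γ > 0`, the functions `a(t) = (−γt)^(−1/2)` and
`c(t) = (−t)^(−1/2)` on `(−∞, 0)` solve the biaxial SU(2) centrally flat system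
`a' = (a/2)c²`, `c' = (c/2)(2γa² − c²)`, and `(a, c) → (0, 0)` as `t → −∞`. -/
theorem biaxial_explicit_solution_to_origin
    (γ : ℝ) (hγ : 0 < γ) (a c : ℝ → ℝ)
    (hadef : ∀ t : ℝ, a t = (-(γ * t)) ^ (-(1 / 2) : ℝ))
    (hcdef : ∀ t : ℝ, c t = (-t) ^ (-(1 / 2) : ℝ)) :
    (∀ t ∈ Set.Iio (0 : ℝ), HasDerivAt a (a t / 2 * (c t) ^ 2) t) ∧
    (∀ t ∈ Set.Iio (0 : ℝ),
      HasDerivAt c (c t / 2 * (2 * γ * (a t) ^ 2 - (c t) ^ 2)) t) ∧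
    Filter.Tendsto a Filter.atBot (nhds 0) ∧
    Filter.Tendsto c Filter.atBot (nhds 0) := by
  have ha : a = fun t => (-(γ * t)) ^ (-(1 / 2) : ℝ) := funext hadef
  have hc : c = fun t => (-(1 * t)) ^ (-(1 / 2) : ℝ) := by
    funext t; rw [hcdef t]; norm_num
  subst ha; subst hc
  refine ⟨?_, ?_, aux_tendsto γ hγ, aux_tendsto 1 one_pos⟩
  · intro t ht
    have ht : t < 0 := ht
    have hx : 0 < -(γ * t) := by nlinarith
    have hu : 0 < -(1 * t) := by nlinarith
    convert aux_deriv γ hγ t ht using 1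
    have e1 : ((-(1 * t)) ^ (-(1 / 2) : ℝ)) ^ 2 = (-(1*t))⁻¹ := by
      rw [← Real.rpow_natCast ((-(1 * t)) ^ (-(1 / 2) : ℝ)) 2,
        ← Real.rpow_mul hu.le]
      norm_num [Real.rpow_neg_one]
    have e2 : (-(γ * t)) ^ ((-(1 / 2) : ℝ) - 1)
        = (-(γ * t)) ^ (-(1 / 2) : ℝ) * (-(γ * t))⁻¹ := by
      rw [Real.rpow_sub hx, Real.rpow_one, div_eq_mul_inv]
    rw [e1, e2]
    have : (-(γ * t))⁻¹ = γ⁻¹ * (-(1*t))⁻¹ := by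
      field_simp
    rw [this]
    field_simp [hγ.ne', ht.ne]
  · intro t ht
    have ht : t < 0 := ht
    have hx : 0 < -(γ * t) := by nlinarith
    have hu : 0 < -(1 * t) := by nlinarith
    convert aux_deriv 1 one_pos t ht using 1
    have e1 : ((-(γ * t)) ^ (-(1 / 2) : ℝ)) ^ 2 = (-(γ*t))⁻¹ := by
      rw [← Real.rpow_natCast ((-(γ * t)) ^ (-(1 / 2) : ℝ)) 2,
        ← Real.rpow_mul hx.le]
      norm_num [Real.rpow_neg_one]
    have e1' : ((-(1 * t)) ^ (-(1 / 2) : ℝ)) ^ 2 = (-(1*t))⁻¹ := by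
      rw [← Real.rpow_natCast ((-(1 * t)) ^ (-(1 / 2) : ℝ)) 2,
        ← Real.rpow_mul hu.le]
      norm_num [Real.rpow_neg_one]
    have e2 : (-(1 * t)) ^ ((-(1 / 2) : ℝ) - 1)
        = (-(1 * t)) ^ (-(1 / 2) : ℝ) * (-(1 * t))⁻¹ := by
      rw [Real.rpow_sub hu, Real.rpow_one, div_eq_mul_inv]
    rw [e1, e1', e2]
    have : (-(γ * t))⁻¹ = γ⁻¹ * (-(1*t))⁻¹ := by
      field_simp
    rw [this]
    field_simp [hγ.ne', ht.ne]
    ring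
end
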